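/- Preservation for configuration reduction: if M | ℋ →γ M' | ℋ', C ⊢ M : T | e, and (C , C'') ⊢ ℋ, then there exists a run-time context C' such that (dom C' \ dom C) ∩ dom C'' = ∅, C' ⊢ M' : T | e, and (C' , C'') ⊢ ℋ'. -/

import Mathlib

set_option autoImplicit false
set_option linter.unusedVariables false

namespace LawOrder

/-! ## Graph representations -/

structure Graph (B : Type) where
  n : ℕ
  label : ℕ → B
  edge : ℕ → ℕ → Prop
  edge_lt : ∀ i j, edge i j → i < n ∧ j < n

namespace Graph

variable {B : Type}

/-- The edge relation is acyclic. -/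
def Acyclic (G : Graph B) : Prop := ∀ i, ¬ Relation.TransGen G.edge i i

/-- The empty graph representation. -/
def zero (B : Type) [Inhabited B] : Graph B :=
  ⟨0, fun _ => default, fun _ _ => False, fun _ _ h => h.elim⟩

/-- Union of two graph representations: disjoint union, second part shifted. -/
def union (G₁ G₂ : Graph B) : Graph B where
  n := G₁.n + G₂.n
  label := fun i => if i < G₁.n then G₁.label i else G₂.label (i - G₁.n)
  edge := fun i j =>
    G₁.edge i j ∨ (G₁.n ≤ i ∧ G₁.n ≤ j ∧ G₂.edge (i - G₁.n) (j - G₁.n))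
  edge_lt := by
    intro i j h
    rcases h with h | ⟨hi, hj, h⟩
    · have := G₁.edge_lt i j h; omega
    · have := G₂.edge_lt _ _ h; omega

/-- Join of two graph representations: union plus all edges from the first
    part to the second part. -/
def join (G₁ G₂ : Graph B) : Graph B where
  n := G₁.n + G₂.n
  label := fun i => if i < G₁.n then G₁.label i else G₂.label (i - G₁.n)
  edge := fun i j =>
    G₁.edge i j ∨ (G₁.n ≤ i ∧ G₁.n ≤ j ∧ G₂.edge (i - G₁.n) (j - G₁.n)) ∨
      (i < G₁.n ∧ G₁.n ≤ j ∧ j < G₁.n + G₂.n)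
  edge_lt := by
    intro i j h
    rcases h with h | ⟨hi, hj, h⟩ | ⟨hi, hj₁, hj₂⟩
    · have := G₁.edge_lt i j h; omega
    · have := G₂.edge_lt _ _ h; omega
    · omega

/-- Isomorphism of graph representations. -/
def Iso (G₁ G₂ : Graph B) : Prop :=
  G₁.n = G₂.n ∧ ∃ f : Fin G₁.n → Fin G₁.n, Function.Bijective f ∧
    (∀ i j : Fin G₁.n, G₁.edge (f i).val (f j).val ↔ G₂.edge i.val j.val) ∧
    (∀ i : Fin G₁.n, G₁.label (f i).val = G₂.label i.val)

/-- `G₁` is a spanning graph representation of `G₂`: same vertices and labels,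
    and the edges of `G₁` are contained in those of `G₂`. -/
def Spanning (G₁ G₂ : Graph B) : Prop :=
  G₁.n = G₂.n ∧ (∀ i, i < G₁.n → G₁.label i = G₂.label i) ∧
    ∀ i j, G₁.edge i j → G₂.edge i j

/-- `f` is a topological ordering of `G`: `f` enumerates the vertices so that
    edges always point forward. -/
def IsTopOrder (G : Graph B) (f : Equiv.Perm (Fin G.n)) : Prop :=
  ∀ i j : Fin G.n, G.edge i.val j.val → f.symm i < f.symm j

/-- `G` has exactly one topological ordering. -/
def Traceable (G : Graph B) : Prop :=
  ∃! f : Equiv.Perm (Fin G.n), G.IsTopOrder f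

/-- The identity enumeration is a topological ordering: all edges increase. -/
def TopOrdered (G : Graph B) : Prop := ∀ i j, G.edge i j → i < j

/-- `k` is a union cut of `G`: no edge crosses from below `k` to `k` or above. -/
def UnionCut (G : Graph B) (k : ℕ) : Prop :=
  0 < k ∧ k < G.n ∧ ∀ i j, i < k → k ≤ j → ¬ G.edge i j

/-- `k` is a join cut of `G`: every pair crossing from below `k` to `k` or
    above (within range) is an edge. -/
def JoinCut (G : Graph B) (k : ℕ) : Prop :=
  0 < k ∧ k < G.n ∧ ∀ i j, i < k → k ≤ j → j < G.n → G.edge i j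

/-- Lower part of the index cut at `k`. -/
def cutLo (G : Graph B) (k : ℕ) : Graph B where
  n := k
  label := G.label
  edge := fun i j => G.edge i j ∧ i < k ∧ j < k
  edge_lt := fun i j h => ⟨h.2.1, h.2.2⟩

/-- Upper part of the index cut at `k` (re-indexed from 0). -/
def cutHi (G : Graph B) (k : ℕ) : Graph B where
  n := G.n - k
  label := fun i => G.label (i + k)
  edge := fun i j => G.edge (i + k) (j + k)
  edge_lt := by
    intro i j h
    have := G.edge_lt _ _ h
    omega

/-- Weak connectedness: any two vertices are joined by an undirected path. -/
def WeaklyConnected (G : Graph B) : Prop :=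
  ∀ i j, i < G.n → j < G.n →
    Relation.ReflTransGen (fun a b => G.edge a b ∨ G.edge b a) i j

/-- Union of a nonempty sequence of graph representations. -/
def unionList (G : Graph B) (L : List (Graph B)) : Graph B :=
  L.foldl union G

end Graph

/-! ## Contexts built from bindings with ordered and unordered composition -/

inductive GCtx (B : Type) where
  | empty : GCtx B
  | bind : B → GCtx B
  | comma : GCtx B → GCtx B → GCtx B
  | par : GCtx B → GCtx B → GCtx B

/-- Context patterns: contexts with a single hole. -/
inductive GPat (B : Type) where
  | hole : GPat B
  | commaL : GPat B → GCtx B → GPat B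
  | commaR : GCtx B → GPat B → GPat B
  | parL : GPat B → GCtx B → GPat B
  | parR : GCtx B → GPat B → GPat B

def GPat.fill {B : Type} : GPat B → GCtx B → GCtx B
  | .hole, Γ => Γ
  | .commaL G Δ, Γ => .comma (G.fill Γ) Δ
  | .commaR Δ G, Γ => .comma Δ (G.fill Γ)
  | .parL G Δ, Γ => .par (G.fill Γ) Δ
  | .parR Δ G, Γ => .par Δ (G.fill Γ)

def GCtx.toList {B : Type} : GCtx B → List B
  | .empty => []
  | .bind b => [b]
  | .comma Γ₁ Γ₂ => Γ₁.toList ++ Γ₂.toList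
  | .par Γ₁ Γ₂ => Γ₁.toList ++ Γ₂.toList

/-- Graph part of the interpretation of a context: unrestricted bindings
    contribute no vertex, ordered bindings one vertex; `comma` is join,
    `par` is union. -/
def GCtx.interpG {B : Type} [Inhabited B] (unr : B → Bool) : GCtx B → Graph B
  | .empty => Graph.zero B
  | .bind b =>
      if unr b then Graph.zero B
      else ⟨1, fun _ => b, fun _ _ => False, fun _ _ h => h.elim⟩
  | .comma Γ₁ Γ₂ => (interpG unr Γ₁).join (interpG unr Γ₂)
  | .par Γ₁ Γ₂ => (interpG unr Γ₁).union (interpG unr Γ₂)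

/-- Set part of the interpretation of a context: the set of its
    unrestricted bindings. -/
def GCtx.unrSet {B : Type} (unr : B → Bool) : GCtx B → Set B
  | .empty => ∅
  | .bind b => if unr b then {b} else ∅
  | .comma Γ₁ Γ₂ => unrSet unr Γ₁ ∪ unrSet unr Γ₂
  | .par Γ₁ Γ₂ => unrSet unr Γ₁ ∪ unrSet unr Γ₂

/-! ## Ordered partial monoids -/

structure OPM (α : Type) where
  mul : α → α → Option α
  eps : α
  le : α → α → Prop
  le_refl : ∀ a, le a a
  le_trans : ∀ a b c, le a b → le b c → le a c
  eps_mul : ∀ a, mul eps a = some a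
  mul_eps : ∀ a, mul a eps = some a
  mul_assoc : ∀ a b c,
    (mul a b).bind (fun x => mul x c) = (mul b c).bind (fun x => mul a x)
  mul_mono : ∀ a a' b b' c', le a a' → le b b' → mul a' b' = some c' →
    ∃ c, mul a b = some c ∧ le c c'

/-- `P.mulLe a b c` means `a ⊙ b` is defined and `a ⊙ b ≤ c`. -/
def OPM.mulLe {α : Type} (P : OPM α) (a b c : α) : Prop :=
  ∃ r, P.mul a b = some r ∧ P.le r c

/-! ## Types and effects (effects are booleans: `false` = 0, `true` = 1) -/

inductive Ty (α : Type) where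
  | unit : Ty α
  | res : α → Ty α
  | arrow : Ty α → Bool → Ty α → Ty α
  | uarrow : Ty α → Bool → Ty α → Ty α
  | rarrow : Ty α → Bool → Ty α → Ty α
  | larrow : Ty α → Bool → Ty α → Ty α
  | uprod : Ty α → Ty α → Ty α
  | oprod : Ty α → Ty α → Ty α

def Ty.unrB {α : Type} : Ty α → Bool
  | .unit => true
  | .res _ => false
  | .arrow _ _ _ => true
  | .uarrow _ _ _ => false
  | .rarrow _ _ _ => false
  | .larrow _ _ _ => false
  | .uprod S T => S.unrB && T.unrB
  | .oprod S T => S.unrB && T.unrB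

/-- Unrestricted types. -/
def Ty.Unr {α : Type} (T : Ty α) : Prop := T.unrB = true

/-- Ordered types. -/
def Ty.Ord {α : Type} (T : Ty α) : Prop := T.unrB = false

/-! ## Bindings and typing contexts -/

inductive Binding (α : Type) where
  | var : ℕ → Ty α → Binding α
  | loc : ℕ → α → Binding α

instance {α : Type} : Inhabited (Binding α) := ⟨Binding.var 0 Ty.unit⟩

def Binding.unrB {α : Type} : Binding α → Bool
  | .var _ T => T.unrB
  | .loc _ _ => false

abbrev Ctx (α : Type) := GCtx (Binding α)
abbrev CtxPat (α : Type) := GPat (Binding α)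

/-- Graph part of the interpretation of a typing context. -/
def interpC {α : Type} (Γ : Ctx α) : Graph (Binding α) :=
  GCtx.interpG Binding.unrB Γ

/-- Set part of the interpretation of a typing context. -/
def unrSetC {α : Type} (Γ : Ctx α) : Set (Binding α) :=
  GCtx.unrSet Binding.unrB Γ

/-- Subcontext relation `Γ₁ ≲ Γ₂`: up to isomorphism on both sides, the graph
    of `Γ₁` is a spanning subgraph of the graph of `Γ₂`, and the unrestricted
    set of `Γ₂` is contained in that of `Γ₁`. -/
def SubC {α : Type} (Γ₁ Γ₂ : Ctx α) : Prop :=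
  (∃ G₁ G₂ : Graph (Binding α),
      Graph.Iso (interpC Γ₁) G₁ ∧ Graph.Spanning G₁ G₂ ∧ Graph.Iso G₂ (interpC Γ₂)) ∧
    unrSetC Γ₂ ⊆ unrSetC Γ₁

def vdom {α : Type} (Γ : Ctx α) : Set ℕ :=
  {x | ∃ T, Binding.var x T ∈ GCtx.toList Γ}

def ldom {α : Type} (Γ : Ctx α) : Set ℕ :=
  {l | ∃ m, Binding.loc l m ∈ GCtx.toList Γ}

/-- All bindings of the context are unrestricted. -/
def isUnrCtx {α : Type} (Γ : Ctx α) : Prop :=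
  ∀ b ∈ GCtx.toList Γ, Binding.unrB b = true

/-- Run-time contexts contain only location bindings. -/
def isRuntime {α : Type} (Γ : Ctx α) : Prop :=
  ∀ b ∈ GCtx.toList Γ, ∃ l m, b = Binding.loc l m

/-! ## Expressions -/

inductive Const (α : Type) where
  | unit : Const α
  | new : α → Const α
  | op : α → Const α
  | split : α → α → Const α
  | drop : Const α

inductive Expr (α : Type) where
  | const : Const α → Expr α
  | loc : ℕ → Expr α
  | var : ℕ → Expr α
  | abs : ℕ → Expr α → Expr α
  | uabs : ℕ → Expr α → Expr α
  | rabs : ℕ → Expr α → Expr α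
  | labs : ℕ → Expr α → Expr α
  | app : Expr α → Expr α → Expr α
  | uapp : Expr α → Expr α → Expr α
  | rapp : Expr α → Expr α → Expr α
  | lapp : Expr α → Expr α → Expr α
  | upair : Expr α → Expr α → Expr α
  | opair : Expr α → Expr α → Expr α
  | ulet : ℕ → ℕ → Expr α → Expr α → Expr α
  | olet : ℕ → ℕ → Expr α → Expr α → Expr α

inductive IsValue {α : Type} : Expr α → Prop where
  | const : ∀ c : Const α, IsValue (Expr.const c)
  | loc : ∀ l : ℕ, IsValue (Expr.loc l)
  | abs : ∀ (x : ℕ) (M : Expr α), IsValue (Expr.abs x M)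
  | uabs : ∀ (x : ℕ) (M : Expr α), IsValue (Expr.uabs x M)
  | rabs : ∀ (x : ℕ) (M : Expr α), IsValue (Expr.rabs x M)
  | labs : ∀ (x : ℕ) (M : Expr α), IsValue (Expr.labs x M)
  | upair : ∀ V₁ V₂ : Expr α, IsValue V₁ → IsValue V₂ → IsValue (Expr.upair V₁ V₂)
  | opair : ∀ V₁ V₂ : Expr α, IsValue V₁ → IsValue V₂ → IsValue (Expr.opair V₁ V₂)

/-- Substitution `M[V/x]` (values substituted at run time are closed, so
    no capture can occur). -/
def subst {α : Type} : Expr α → Expr α → ℕ → Expr α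
  | Expr.const c, _, _ => Expr.const c
  | Expr.loc l, _, _ => Expr.loc l
  | Expr.var y, V, x => if y = x then V else Expr.var y
  | Expr.abs y N, V, x => Expr.abs y (if y = x then N else subst N V x)
  | Expr.uabs y N, V, x => Expr.uabs y (if y = x then N else subst N V x)
  | Expr.rabs y N, V, x => Expr.rabs y (if y = x then N else subst N V x)
  | Expr.labs y N, V, x => Expr.labs y (if y = x then N else subst N V x)
  | Expr.app M N, V, x => Expr.app (subst M V x) (subst N V x)
  | Expr.uapp M N, V, x => Expr.uapp (subst M V x) (subst N V x)
  | Expr.rapp M N, V, x => Expr.rapp (subst M V x) (subst N V x)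
  | Expr.lapp M N, V, x => Expr.lapp (subst M V x) (subst N V x)
  | Expr.upair M N, V, x => Expr.upair (subst M V x) (subst N V x)
  | Expr.opair M N, V, x => Expr.opair (subst M V x) (subst N V x)
  | Expr.ulet y z M N, V, x =>
      Expr.ulet y z (subst M V x) (if y = x ∨ z = x then N else subst N V x)
  | Expr.olet y z M N, V, x =>
      Expr.olet y z (subst M V x) (if y = x ∨ z = x then N else subst N V x)

/-! ## Typing (Fig. 7) -/

inductive Typing {α : Type} (P : OPM α) : Ctx α → Expr α → Ty α → Bool → Prop where
  | unit : Typing P GCtx.empty (Expr.const Const.unit) Ty.unit false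
  | new : ∀ m : α,
      Typing P GCtx.empty (Expr.const (Const.new m))
        (Ty.arrow Ty.unit false (Ty.res m)) false
  | op : ∀ m₀ m₁ m₂ : α, P.mulLe m₁ m₂ m₀ →
      Typing P GCtx.empty (Expr.const (Const.op m₁))
        (Ty.arrow (Ty.res m₀) true (Ty.res m₂)) false
  | split : ∀ m₀ m₁ m₂ : α, P.mulLe m₁ m₂ m₀ →
      Typing P GCtx.empty (Expr.const (Const.split m₁ m₂))
        (Ty.arrow (Ty.res m₀) false (Ty.oprod (Ty.res m₁) (Ty.res m₂))) false
  | drop : ∀ m : α, P.le P.eps m →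
      Typing P GCtx.empty (Expr.const Const.drop)
        (Ty.arrow (Ty.res m) false Ty.unit) false
  | var : ∀ (x : ℕ) (T : Ty α),
      Typing P (GCtx.bind (Binding.var x T)) (Expr.var x) T false
  | loc : ∀ (l : ℕ) (m : α),
      Typing P (GCtx.bind (Binding.loc l m)) (Expr.loc l) (Ty.res m) false
  | abs : ∀ (Γ : Ctx α) (x : ℕ) (S T : Ty α) (M : Expr α) (e : Bool),
      x ∉ vdom Γ → isUnrCtx Γ →
      Typing P (GCtx.comma Γ (GCtx.bind (Binding.var x S))) M T e →
      Typing P Γ (Expr.abs x M) (Ty.arrow S e T) false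
  | uabs : ∀ (Γ : Ctx α) (x : ℕ) (S T : Ty α) (M : Expr α) (e : Bool),
      x ∉ vdom Γ →
      Typing P (GCtx.par Γ (GCtx.bind (Binding.var x S))) M T e →
      Typing P Γ (Expr.uabs x M) (Ty.uarrow S e T) false
  | rabs : ∀ (Γ : Ctx α) (x : ℕ) (S T : Ty α) (M : Expr α) (e : Bool),
      x ∉ vdom Γ →
      Typing P (GCtx.comma Γ (GCtx.bind (Binding.var x S))) M T e →
      Typing P Γ (Expr.rabs x M) (Ty.rarrow S e T) false
  | labs : ∀ (Γ : Ctx α) (x : ℕ) (S T : Ty α) (M : Expr α) (e : Bool),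
      x ∉ vdom Γ →
      Typing P (GCtx.comma (GCtx.bind (Binding.var x S)) Γ) M T e →
      Typing P Γ (Expr.labs x M) (Ty.larrow S e T) false
  | app : ∀ (Γ₁ Γ₂ : Ctx α) (M N : Expr α) (S T : Ty α) (e e₁ e₂ : Bool),
      Typing P Γ₁ M (Ty.arrow S e T) e₁ → Typing P Γ₂ N S e₂ →
      Typing P (GCtx.comma Γ₁ Γ₂) (Expr.app M N) T (e || e₁ || e₂)
  | uapp : ∀ (Γ₁ Γ₂ : Ctx α) (M N : Expr α) (S T : Ty α) (e e₁ e₂ : Bool),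
      Typing P Γ₁ M (Ty.uarrow S e T) e₁ → Typing P Γ₂ N S e₂ →
      Typing P (GCtx.par Γ₁ Γ₂) (Expr.uapp M N) T (e || e₁ || e₂)
  | rapp : ∀ (Γ₁ Γ₂ : Ctx α) (M N : Expr α) (S T : Ty α) (e e₁ : Bool),
      Typing P Γ₁ M (Ty.rarrow S e T) e₁ → Typing P Γ₂ N S false →
      Typing P (GCtx.comma Γ₁ Γ₂) (Expr.rapp M N) T (e || e₁)
  | lapp : ∀ (Γ₁ Γ₂ : Ctx α) (M N : Expr α) (S T : Ty α) (e e₂ : Bool),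
      Typing P Γ₂ M (Ty.larrow S e T) false → Typing P Γ₁ N S e₂ →
      Typing P (GCtx.comma Γ₁ Γ₂) (Expr.lapp M N) T (e || e₂)
  | upair : ∀ (Γ₁ Γ₂ : Ctx α) (M N : Expr α) (S T : Ty α) (e₁ e₂ : Bool),
      Typing P Γ₁ M S e₁ → Typing P Γ₂ N T e₂ →
      Typing P (GCtx.par Γ₁ Γ₂) (Expr.upair M N) (Ty.uprod S T) (e₁ || e₂)
  | opair : ∀ (Γ₁ Γ₂ : Ctx α) (M N : Expr α) (S T : Ty α) (e₁ e₂ : Bool),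
      (Ty.Ord S → e₂ = false) →
      Typing P Γ₁ M S e₁ → Typing P Γ₂ N T e₂ →
      Typing P (GCtx.comma Γ₁ Γ₂) (Expr.opair M N) (Ty.oprod S T) (e₁ || e₂)
  | ulet : ∀ (G : CtxPat α) (Γ : Ctx α) (x y : ℕ) (M N : Expr α)
        (S₁ S₂ T : Ty α) (e : Bool),
      x ≠ y → x ∉ vdom (GPat.fill G Γ) → y ∉ vdom (GPat.fill G Γ) →
      Typing P Γ M (Ty.uprod S₁ S₂) false →
      Typing P (GPat.fill G (GCtx.par (GCtx.bind (Binding.var x S₁))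
        (GCtx.bind (Binding.var y S₂)))) N T e →
      Typing P (GPat.fill G Γ) (Expr.ulet x y M N) T e
  | olet : ∀ (G : CtxPat α) (Γ : Ctx α) (x y : ℕ) (M N : Expr α)
        (S₁ S₂ T : Ty α) (e : Bool),
      x ≠ y → x ∉ vdom (GPat.fill G Γ) → y ∉ vdom (GPat.fill G Γ) →
      Typing P Γ M (Ty.oprod S₁ S₂) false →
      Typing P (GPat.fill G (GCtx.comma (GCtx.bind (Binding.var x S₁))
        (GCtx.bind (Binding.var y S₂)))) N T e →
      Typing P (GPat.fill G Γ) (Expr.olet x y M N) T e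
  | weaken : ∀ (Γ₁ Γ₂ : Ctx α) (M : Expr α) (T : Ty α) (e₁ e₂ : Bool),
      Typing P Γ₁ M T e₁ → SubC Γ₂ Γ₁ → e₁ ≤ e₂ →
      Typing P Γ₂ M T e₂

/-! ## Heaps -/

structure Heap (α : Type) where
  find : ℕ → Option (ℕ × α × α)
  fin : Set.Finite {l | find l ≠ none}

def Heap.dom {α : Type} (H : Heap α) : Set ℕ := {l | H.find l ≠ none}

def Heap.update {α : Type} (H : Heap α) (l : ℕ) (t : ℕ × α × α) : Heap α where
  find := fun l' => if l' = l then some t else H.find l'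
  fin := by
    have hsub : {l' | (if l' = l then some t else H.find l') ≠ none} ⊆
        insert l {l' | H.find l' ≠ none} := by
      intro x hx
      by_cases h : x = l
      · exact Set.mem_insert_iff.mpr (Or.inl h)
      · refine Set.mem_insert_iff.mpr (Or.inr ?_)
        simp only [Set.mem_setOf_eq, if_neg h] at hx
        exact hx
    exact Set.Finite.subset (Set.Finite.insert l H.fin) hsub

def Heap.erase {α : Type} (H : Heap α) (l : ℕ) : Heap α where
  find := fun l' => if l' = l then none else H.find l'
  fin := by
    apply Set.Finite.subset H.fin
    intro x hx
    simp only [Set.mem_setOf_eq] at hx ⊢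
    by_cases h : x = l
    · rw [if_pos h] at hx; exact absurd rfl hx
    · rw [if_neg h] at hx; exact hx

def Heap.empty (α : Type) : Heap α :=
  ⟨fun _ => none, Set.Finite.subset Set.finite_empty (fun _ hx => (hx rfl).elim)⟩

/-! ## Reduction -/

/-- Expression reduction `M →β M'`. -/
inductive BetaStep {α : Type} : Expr α → Expr α → Prop where
  | beta : ∀ (x : ℕ) (M V : Expr α), IsValue V →
      BetaStep (Expr.app (Expr.abs x M) V) (subst M V x)
  | ubeta : ∀ (x : ℕ) (M V : Expr α), IsValue V →
      BetaStep (Expr.uapp (Expr.uabs x M) V) (subst M V x)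
  | rbeta : ∀ (x : ℕ) (M V : Expr α), IsValue V →
      BetaStep (Expr.rapp (Expr.rabs x M) V) (subst M V x)
  | lbeta : ∀ (x : ℕ) (M V : Expr α), IsValue V →
      BetaStep (Expr.lapp (Expr.labs x M) V) (subst M V x)
  | uletv : ∀ (x y : ℕ) (M V₁ V₂ : Expr α), x ≠ y → IsValue V₁ → IsValue V₂ →
      BetaStep (Expr.ulet x y (Expr.upair V₁ V₂) M) (subst (subst M V₁ x) V₂ y)
  | oletv : ∀ (x y : ℕ) (M V₁ V₂ : Expr α), x ≠ y → IsValue V₁ → IsValue V₂ →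
      BetaStep (Expr.olet x y (Expr.opair V₁ V₂) M) (subst (subst M V₁ x) V₂ y)

/-- Configuration reduction `M | ℋ →γ M' | ℋ'`. -/
inductive CfgStep {α : Type} (P : OPM α) : Expr α → Heap α → Expr α → Heap α → Prop where
  | new : ∀ (H : Heap α) (l : ℕ) (m : α), l ∉ Heap.dom H →
      CfgStep P (Expr.app (Expr.const (Const.new m)) (Expr.const Const.unit)) H
        (Expr.loc l) (H.update l (0, m, P.eps))
  | op : ∀ (H : Heap α) (l n : ℕ) (m₀ m m' m'' : α),
      H.find l = some (n, m₀, m') → P.mul m' m = some m'' →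
      (∃ m₃ : α, P.mulLe m'' m₃ m₀) →
      CfgStep P (Expr.app (Expr.const (Const.op m)) (Expr.loc l)) H
        (Expr.loc l) (H.update l (n, m₀, m''))
  | cl1 : ∀ (H : Heap α) (l n : ℕ) (m₀ m : α),
      H.find l = some (n + 1, m₀, m) →
      CfgStep P (Expr.app (Expr.const Const.drop) (Expr.loc l)) H
        (Expr.const Const.unit) (H.update l (n, m₀, m))
  | cl2 : ∀ (H : Heap α) (l : ℕ) (m₀ m : α),
      H.find l = some (0, m₀, m) → P.le m m₀ →
      CfgStep P (Expr.app (Expr.const Const.drop) (Expr.loc l)) H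
        (Expr.const Const.unit) (H.erase l)
  | sp : ∀ (H : Heap α) (l n : ℕ) (m₀ m m₁ m₂ : α),
      H.find l = some (n, m₀, m) →
      CfgStep P (Expr.app (Expr.const (Const.split m₁ m₂)) (Expr.loc l)) H
        (Expr.opair (Expr.loc l) (Expr.loc l)) (H.update l (n + 1, m₀, m))

/-- Call-by-value evaluation contexts (left-to-right, except that
    `<`-applications evaluate right-to-left). -/
inductive ECtx (α : Type) : Type where
  | hole : ECtx α
  | appL : ECtx α → Expr α → ECtx α
  | appR : (V : Expr α) → IsValue V → ECtx α → ECtx α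
  | uappL : ECtx α → Expr α → ECtx α
  | uappR : (V : Expr α) → IsValue V → ECtx α → ECtx α
  | rappL : ECtx α → Expr α → ECtx α
  | rappR : (V : Expr α) → IsValue V → ECtx α → ECtx α
  | lappL : ECtx α → (V : Expr α) → IsValue V → ECtx α
  | lappR : Expr α → ECtx α → ECtx α
  | upairL : ECtx α → Expr α → ECtx α
  | upairR : (V : Expr α) → IsValue V → ECtx α → ECtx α
  | opairL : ECtx α → Expr α → ECtx α
  | opairR : (V : Expr α) → IsValue V → ECtx α → ECtx α
  | uletE : ℕ → ℕ → ECtx α → Expr α → ECtx α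
  | oletE : ℕ → ℕ → ECtx α → Expr α → ECtx α

def ECtx.plug {α : Type} : ECtx α → Expr α → Expr α
  | .hole, M => M
  | .appL E N, M => Expr.app (E.plug M) N
  | .appR V _ E, M => Expr.app V (E.plug M)
  | .uappL E N, M => Expr.uapp (E.plug M) N
  | .uappR V _ E, M => Expr.uapp V (E.plug M)
  | .rappL E N, M => Expr.rapp (E.plug M) N
  | .rappR V _ E, M => Expr.rapp V (E.plug M)
  | .lappL E V _, M => Expr.lapp (E.plug M) V
  | .lappR N E, M => Expr.lapp N (E.plug M)
  | .upairL E N, M => Expr.upair (E.plug M) N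
  | .upairR V _ E, M => Expr.upair V (E.plug M)
  | .opairL E N, M => Expr.opair (E.plug M) N
  | .opairR V _ E, M => Expr.opair V (E.plug M)
  | .uletE x y E N, M => Expr.ulet x y (E.plug M) N
  | .oletE x y E N, M => Expr.olet x y (E.plug M) N

/-- Contextual reduction `M | ℋ → M' | ℋ'`. -/
inductive Step {α : Type} (P : OPM α) : Expr α → Heap α → Expr α → Heap α → Prop where
  | exp : ∀ (E : ECtx α) (M M' : Expr α) (H : Heap α),
      BetaStep M M' → Step P (E.plug M) H (E.plug M') H
  | cfg : ∀ (E : ECtx α) (M M' : Expr α) (H H' : Heap α),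
      CfgStep P M H M' H' → Step P (E.plug M) H (E.plug M') H'

/-! ## Run-time contexts, focus, heap typing -/

/-- Focus on location `l`: replace every binding of a location other than `l`
    by the empty context. -/
def focus {α : Type} : Ctx α → ℕ → Ctx α
  | GCtx.empty, _ => GCtx.empty
  | GCtx.bind (Binding.loc l' m), l =>
      if l' = l then GCtx.bind (Binding.loc l' m) else GCtx.empty
  | GCtx.bind (Binding.var x T), _ => GCtx.bind (Binding.var x T)
  | GCtx.comma Γ₁ Γ₂, l => GCtx.comma (focus Γ₁ l) (focus Γ₂ l)
  | GCtx.par Γ₁ Γ₂, l => GCtx.par (focus Γ₁ l) (focus Γ₂ l)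

/-- A run-time context is order-defined if every focus graph has a unique
    topological ordering. -/
def orderDefined {α : Type} (Γ : Ctx α) : Prop :=
  ∀ l : ℕ, Graph.Traceable (interpC (focus Γ l))

def bUsage {α : Type} (P : OPM α) : Binding α → α
  | Binding.loc _ m => m
  | Binding.var _ _ => P.eps

def listProd {α : Type} (P : OPM α) : List α → Option α
  | [] => some P.eps
  | m :: ms => (listProd P ms).bind fun r => P.mul m r

/-- `focusUsage P Γ l u` : the usage projection of `⟨Γ⟩_l` is defined and
    equal to `u` (the ⊙-product of the usages along a topological ordering of
    the focus graph). -/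
def focusUsage {α : Type} (P : OPM α) (Γ : Ctx α) (l : ℕ) (u : α) : Prop :=
  ∃ f : Equiv.Perm (Fin (interpC (focus Γ l)).n),
    Graph.IsTopOrder (interpC (focus Γ l)) f ∧
      listProd P (List.ofFn fun k =>
        bUsage P ((interpC (focus Γ l)).label (f k).val)) = some u

/-- Heap typing `C ⊢ ℋ`. -/
def HeapTy {α : Type} (P : OPM α) (C : Ctx α) (H : Heap α) : Prop :=
  orderDefined C ∧
  ldom C = Heap.dom H ∧
  ∀ (l n : ℕ) (m₀ m : α), H.find l = some (n, m₀, m) →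
    (interpC (focus C l)).n = n + 1 ∧
    ∃ u r : α, focusUsage P C l u ∧ P.mul m u = some r ∧ P.le r m₀

/-! ## Auxiliary lemmas -/

section Aux

variable {α : Type} {B : Type}

/-! ### OPM helpers -/

lemma OPM.assoc₁ (P : OPM α) {a b c x y : α} (h1 : P.mul a b = some x)
    (h2 : P.mul x c = some y) : ∃ z, P.mul b c = some z ∧ P.mul a z = some y := by
  have h := P.mul_assoc a b c
  rw [h1] at h
  simp only [Option.bind_eq_bind, Option.bind_some] at h
  rw [h2] at h
  cases hbc : P.mul b c with
  | none => rw [hbc] at h; simp at h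
  | some z =>
    rw [hbc] at h
    simp only [Option.bind_some] at h
    exact ⟨z, rfl, h.symm⟩

lemma OPM.assoc₂ (P : OPM α) {a b c z y : α} (h1 : P.mul b c = some z)
    (h2 : P.mul a z = some y) : ∃ x, P.mul a b = some x ∧ P.mul x c = some y := by
  have h := P.mul_assoc a b c
  rw [h1] at h
  simp only [Option.bind_eq_bind, Option.bind_some] at h
  rw [h2] at h
  cases hab : P.mul a b with
  | none => rw [hab] at h; simp at h
  | some x =>
    rw [hab] at h
    simp only [Option.bind_some] at h
    exact ⟨x, rfl, h⟩

lemma OPM.monoL (P : OPM α) {a a' w r : α} (h : P.le a a') (hm : P.mul a' w = some r) :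
    ∃ r', P.mul a w = some r' ∧ P.le r' r :=
  P.mul_mono a a' w w r h (P.le_refl w) hm

lemma OPM.monoR (P : OPM α) {a w w' r : α} (h : P.le w w') (hm : P.mul a w' = some r) :
    ∃ r', P.mul a w = some r' ∧ P.le r' r :=
  P.mul_mono a a w w' r (P.le_refl a) h hm

/-! ### Iso / Spanning -/

namespace Graph

lemma iso_refl (G : Graph B) : Iso G G :=
  ⟨rfl, id, Function.bijective_id, fun _ _ => Iff.rfl, fun _ => rfl⟩

lemma iso_n {G G' : Graph B} (h : Iso G G') : G.n = G'.n := h.1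

lemma iso_symm {G G' : Graph B} (h : Iso G G') : Iso G' G := by
  obtain ⟨hn, f, hbij, hedge, hlab⟩ := h
  refine ⟨hn.symm, ?_⟩
  let F : Fin G.n ≃ Fin G.n := Equiv.ofBijective f hbij
  let c : Fin G.n ≃ Fin G'.n := finCongr hn
  refine ⟨fun i => c (F.symm (c.symm i)), ?_, ?_, ?_⟩
  · exact (c.symm.trans (F.symm.trans c)).bijective
  · intro i j
    have h1 := hedge (F.symm (c.symm i)) (F.symm (c.symm j))
    have h2 : f (F.symm (c.symm i)) = c.symm i := F.apply_symm_apply _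
    have h3 : f (F.symm (c.symm j)) = c.symm j := F.apply_symm_apply _
    rw [h2, h3] at h1
    simpa [c] using h1.symm
  · intro i
    have h1 := hlab (F.symm (c.symm i))
    have h2 : f (F.symm (c.symm i)) = c.symm i := F.apply_symm_apply _
    rw [h2] at h1
    simpa [c] using h1.symm

lemma iso_trans {G₁ G₂ G₃ : Graph B} (h : Iso G₁ G₂) (h' : Iso G₂ G₃) : Iso G₁ G₃ := by
  obtain ⟨hn, f, hbij, hedge, hlab⟩ := h
  obtain ⟨hn', g, gbij, gedge, glab⟩ := h'
  refine ⟨hn.trans hn', ?_⟩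
  let c : Fin G₂.n ≃ Fin G₁.n := finCongr hn.symm
  refine ⟨fun i => f (c (g (c.symm i))), ?_, ?_, ?_⟩
  · exact Function.Bijective.comp hbij ((c.symm.trans ((Equiv.ofBijective g gbij).trans c)).bijective)
  · intro i j
    have h1 := hedge (c (g (c.symm i))) (c (g (c.symm j)))
    have h2 := gedge (c.symm i) (c.symm j)
    simp only [finCongr_apply_coe, finCongr_symm_apply_coe, c] at h1 h2 ⊢
    rw [h1, h2]
  · intro i
    have h1 := hlab (c (g (c.symm i)))
    have h2 := glab (c.symm i)
    simp only [finCongr_apply_coe, finCongr_symm_apply_coe, c] at h1 h2 ⊢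
    rw [h1, h2]

lemma span_refl (G : Graph B) : Spanning G G := ⟨rfl, fun _ _ => rfl, fun _ _ h => h⟩

lemma span_trans {G₁ G₂ G₃ : Graph B} (h : Spanning G₁ G₂) (h' : Spanning G₂ G₃) :
    Spanning G₁ G₃ :=
  ⟨h.1.trans h'.1, fun i hi => (h.2.1 i hi).trans (h'.2.1 i (h.1 ▸ hi)),
    fun i j e => h'.2.2 i j (h.2.2 i j e)⟩

lemma span_iso_swap {G₁ G₂ G₃ : Graph B} (hs : Spanning G₁ G₂) (hi : Iso G₂ G₃) :
    ∃ G, Iso G₁ G ∧ Spanning G G₃ := by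
  obtain ⟨hn, hlab, hedge⟩ := hs
  obtain ⟨hn', f, fbij, fedge, flab⟩ := hi
  let c : Fin G₁.n ≃ Fin G₂.n := finCongr hn
  let f' : Fin G₁.n → Fin G₁.n := fun i => c.symm (f (c i))
  refine ⟨⟨G₁.n, fun i => if h : i < G₁.n then G₁.label (f' ⟨i, h⟩).val else G₁.label i,
      fun i j => ∃ hi : i < G₁.n, ∃ hj : j < G₁.n, G₁.edge (f' ⟨i, hi⟩).val (f' ⟨j, hj⟩).val,
      ?_⟩, ⟨rfl, f', ?_, ?_, ?_⟩, ?_, ?_, ?_⟩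
  · rintro i j ⟨hi, hj, _⟩; exact ⟨hi, hj⟩
  · exact (c.trans ((Equiv.ofBijective f fbij).trans c.symm)).bijective
  · intro i j
    constructor
    · intro h; exact ⟨i.isLt, j.isLt, h⟩
    · rintro ⟨hi, hj, h⟩; exact h
  · intro i
    simp only [Fin.is_lt, dite_true]
  · simpa using hn.trans hn'
  · intro i hi
    simp only [dif_pos hi]
    have h1 : (f' ⟨i, hi⟩).val < G₁.n := (f' ⟨i, hi⟩).isLt
    have h2 := hlab (f' ⟨i, hi⟩).val h1
    have h3 := flab (c ⟨i, hi⟩)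
    have hv : (f' ⟨i, hi⟩).val = (f (c ⟨i, hi⟩)).val := by simp [f', c]
    rw [h2, hv, h3]
    simp [c]
  · rintro i j ⟨hi, hj, h⟩
    have h1 := hedge _ _ h
    have h2 := fedge (c ⟨i, hi⟩) (c ⟨j, hj⟩)
    have hv : (f' ⟨i, hi⟩).val = (f (c ⟨i, hi⟩)).val := by simp [f', c]
    have hv' : (f' ⟨j, hj⟩).val = (f (c ⟨j, hj⟩)).val := by simp [f', c]
    rw [hv, hv'] at h1
    rw [h2] at h1
    simpa [c] using h1

end Graph

/-! ### SubC basics -/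

lemma subC_refl (Γ : Ctx α) : SubC Γ Γ :=
  ⟨⟨interpC Γ, interpC Γ, Graph.iso_refl _, Graph.span_refl _, Graph.iso_refl _⟩,
    fun _ h => h⟩

lemma subC_trans {Γ Δ Θ : Ctx α} (h : SubC Γ Δ) (h' : SubC Δ Θ) : SubC Γ Θ := by
  obtain ⟨⟨G₁, G₂, i1, s12, i2⟩, hu⟩ := h
  obtain ⟨⟨H₁, H₂, j1, t, j2⟩, hu'⟩ := h'
  obtain ⟨G, iG, sG⟩ := Graph.span_iso_swap s12 (Graph.iso_trans i2 j1)
  exact ⟨⟨G, H₂, Graph.iso_trans i1 iG, Graph.span_trans sG t, j2⟩,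
    fun b hb => hu (hu' hb)⟩

lemma subC_n {Γ Δ : Ctx α} (h : SubC Γ Δ) : (interpC Γ).n = (interpC Δ).n := by
  obtain ⟨⟨G₁, G₂, i1, s12, i2⟩, -⟩ := h
  exact (i1.1.trans s12.1).trans i2.1

lemma subC_label_one {Γ Δ : Ctx α} (h : SubC Γ Δ) (h1 : (interpC Δ).n = 1) :
    (interpC Γ).label 0 = (interpC Δ).label 0 := by
  obtain ⟨⟨G₁, G₂, ⟨hn1, f1, _, _, hl1⟩, ⟨hn2, hl2, _⟩, ⟨hn3, f3, _, _, hl3⟩⟩, -⟩ := h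
  have hΓ : (interpC Γ).n = 1 := by omega
  have e1 := hl1 ⟨0, by omega⟩
  have e2 := hl2 0 (by omega)
  have e3 := hl3 ⟨0, by omega⟩
  have v1 : (f1 ⟨0, by omega⟩).val = 0 := by
    have := (f1 ⟨0, by omega⟩).isLt; omega
  have v3 : (f3 ⟨0, by omega⟩).val = 0 := by
    have := (f3 ⟨0, by omega⟩).isLt; omega
  rw [v1] at e1
  rw [v3] at e3
  simp only at e1 e2 e3
  rw [e1, e2, e3]

/-! ### Label lists -/

/-- Single-vertex graph. -/
def gsingle (b : B) : Graph B :=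
  ⟨1, fun _ => b, fun _ _ => False, fun _ _ h => h.elim⟩

def labelsList (G : Graph B) : List B := List.ofFn (fun i : Fin G.n => G.label i.val)

lemma length_labelsList (G : Graph B) : (labelsList G).length = G.n := by
  simp [labelsList]

lemma labelsList_join (A G : Graph B) :
    labelsList (A.join G) = labelsList A ++ labelsList G := by
  unfold labelsList
  rw [show (A.join G).n = A.n + G.n from rfl, List.ofFn_add]
  congr 1
  · apply List.ext_getElem (by simp)
    intro i h1 h2
    simp only [List.getElem_ofFn]
    have : (Fin.castAdd G.n ⟨i, by simpa using h2⟩).val = i := rfl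
    simp only [List.length_ofFn] at h2
    show (A.join G).label _ = _
    simp only [Graph.join, this]
    rw [if_pos (by simpa using h2)]
    rfl
  · apply List.ext_getElem (by simp)
    intro i h1 h2
    simp only [List.getElem_ofFn]
    simp only [List.length_ofFn] at h2
    show (A.join G).label (A.n + i) = G.label i
    simp only [Graph.join]
    rw [if_neg (by omega)]
    congr 1
    omega

lemma labelsList_union (A G : Graph B) :
    labelsList (A.union G) = labelsList A ++ labelsList G := by
  unfold labelsList
  rw [show (A.union G).n = A.n + G.n from rfl, List.ofFn_add]
  congr 1
  · apply List.ext_getElem (by simp)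
    intro i h1 h2
    simp only [List.getElem_ofFn]
    simp only [List.length_ofFn] at h2
    show (A.union G).label _ = _
    have : (Fin.castAdd G.n ⟨i, by simpa using h2⟩).val = i := rfl
    simp only [Graph.union, this]
    rw [if_pos (by simpa using h2)]
    rfl
  · apply List.ext_getElem (by simp)
    intro i h1 h2
    simp only [List.getElem_ofFn]
    simp only [List.length_ofFn] at h2
    show (A.union G).label (A.n + i) = G.label i
    simp only [Graph.union]
    rw [if_neg (by omega)]
    congr 1
    omega

lemma labelsList_interpC (Γ : Ctx α) :
    labelsList (interpC Γ) = (GCtx.toList Γ).filter (fun b => !b.unrB) := by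
  induction Γ with
  | empty => simp [labelsList, interpC, GCtx.interpG, Graph.zero, GCtx.toList]
  | bind b =>
    by_cases h : b.unrB
    · simp [labelsList, interpC, GCtx.interpG, Graph.zero, GCtx.toList, h]
    · have hb : b.unrB = false := by simpa using h
      simp [labelsList, interpC, GCtx.interpG, GCtx.toList, hb, List.ofFn_succ]
  | comma Γ₁ Γ₂ ih1 ih2 =>
    show labelsList ((interpC Γ₁).join (interpC Γ₂)) = _
    rw [labelsList_join, ih1, ih2]
    simp [GCtx.toList]
  | par Γ₁ Γ₂ ih1 ih2 =>
    show labelsList ((interpC Γ₁).union (interpC Γ₂)) = _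
    rw [labelsList_union, ih1, ih2]
    simp [GCtx.toList]

lemma n_interpC (Γ : Ctx α) :
    (interpC Γ).n = ((GCtx.toList Γ).filter (fun b => !b.unrB)).length := by
  rw [← labelsList_interpC, length_labelsList]

lemma label_zero_interpC {Γ : Ctx α} {b : Binding α}
    (h : (GCtx.toList Γ).filter (fun b => !b.unrB) = [b]) : (interpC Γ).label 0 = b := by
  have h1 := labelsList_interpC Γ
  rw [h] at h1
  have hn : (interpC Γ).n = 1 := by rw [n_interpC, h]; rfl
  have hlen : 0 < (labelsList (interpC Γ)).length := by rw [h1]; simp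
  have h2 : (labelsList (interpC Γ))[0]'hlen = b := by
    simp only [h1]; rfl
  rw [← h2]
  exact (List.getElem_ofFn hlen).symm

/-- Interpretation graphs have no self-loops. -/
lemma noloop_interpC (Γ : Ctx α) : ∀ i, ¬ (interpC Γ).edge i i := by
  induction Γ with
  | empty => intro i h; exact h
  | bind b =>
    intro i h
    by_cases hb : b.unrB <;> simp [interpC, GCtx.interpG, hb, Graph.zero] at h
  | comma Γ₁ Γ₂ ih1 ih2 =>
    intro i h
    rcases h with h | ⟨_, _, h⟩ | ⟨h1, h2, _⟩
    · exact ih1 i h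
    · exact ih2 _ h
    · omega
  | par Γ₁ Γ₂ ih1 ih2 =>
    intro i h
    rcases h with h | ⟨_, _, h⟩
    · exact ih1 i h
    · exact ih2 _ h

/-! ### toList of focus, ldom -/

def keepB (l : ℕ) : Binding α → Bool
  | .loc l' _ => decide (l' = l)
  | .var _ _ => true

lemma toList_focus (Γ : Ctx α) (l : ℕ) :
    GCtx.toList (focus Γ l) = (GCtx.toList Γ).filter (keepB l) := by
  induction Γ with
  | empty => rfl
  | bind b =>
    cases b with
    | var x T => rfl
    | loc l' m =>
      by_cases h : l' = l
      · simp [focus, GCtx.toList, keepB, h]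
      · simp [focus, GCtx.toList, keepB, h]
  | comma Γ₁ Γ₂ ih1 ih2 => simp [focus, GCtx.toList, ih1, ih2]
  | par Γ₁ Γ₂ ih1 ih2 => simp [focus, GCtx.toList, ih1, ih2]

lemma ldom_toList (Γ : Ctx α) : ldom Γ = {l | ∃ m, Binding.loc l m ∈ GCtx.toList Γ} := rfl

lemma ldom_comma (Γ₁ Γ₂ : Ctx α) : ldom (GCtx.comma Γ₁ Γ₂) = ldom Γ₁ ∪ ldom Γ₂ := by
  ext x
  simp only [ldom, GCtx.toList, List.mem_append, Set.mem_setOf_eq, Set.mem_union]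
  constructor
  · rintro ⟨m, h | h⟩
    · exact Or.inl ⟨m, h⟩
    · exact Or.inr ⟨m, h⟩
  · rintro (⟨m, h⟩ | ⟨m, h⟩)
    · exact ⟨m, Or.inl h⟩
    · exact ⟨m, Or.inr h⟩

lemma runtime_filter_unr {Γ : Ctx α} (h : isRuntime Γ) :
    (GCtx.toList Γ).filter (fun b => !Binding.unrB b) = GCtx.toList Γ := by
  apply List.filter_eq_self.mpr
  intro b hb
  obtain ⟨l, m, rfl⟩ := h b hb
  rfl

/-- For a runtime context, the number of vertices of the focus graph is the
number of bindings of `l`. -/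
lemma n_focus_runtime {Γ : Ctx α} (hr : isRuntime Γ) (l : ℕ) :
    (interpC (focus Γ l)).n =
      ((GCtx.toList Γ).filter (fun b => keepB l b)).length := by
  rw [n_interpC, toList_focus, List.filter_filter]
  congr 1
  apply List.filter_congr
  intro b hb
  obtain ⟨l', m, rfl⟩ := hr b hb
  simp [keepB, Binding.unrB]

lemma n_focus_zero_iff {Γ : Ctx α} (hr : isRuntime Γ) (l : ℕ) :
    (interpC (focus Γ l)).n = 0 ↔ l ∉ ldom Γ := by
  rw [n_focus_runtime hr l, List.length_eq_zero_iff, List.filter_eq_nil_iff]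
  constructor
  · intro h hl
    obtain ⟨m, hm⟩ := hl
    exact h _ hm (by simp [keepB])
  · intro h b hb hk
    obtain ⟨l', m, rfl⟩ := hr b hb
    simp only [keepB, decide_eq_true_eq] at hk
    subst hk
    exact h ⟨m, hb⟩

/-! ### Topological orders, usage -/

def orderLabels (G : Graph B) (f : Equiv.Perm (Fin G.n)) : List B :=
  List.ofFn (fun k => G.label (f k).val)

def usage (P : OPM α) (G : Graph (Binding α)) (u : α) : Prop :=
  ∃ f, Graph.IsTopOrder G f ∧ listProd P ((orderLabels G f).map (bUsage P)) = some u

lemma focusUsage_iff_usage (P : OPM α) (Γ : Ctx α) (l : ℕ) (u : α) :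
    focusUsage P Γ l u ↔ usage P (interpC (focus Γ l)) u := by
  unfold focusUsage usage orderLabels
  simp only [List.map_ofFn, Function.comp_def]

lemma traceable_of_n_zero {G : Graph B} (h : G.n = 0) : Graph.Traceable G := by
  refine ⟨Equiv.refl _, ?_, ?_⟩
  · intro i j _
    exact absurd i.isLt (by omega)
  · intro g _
    apply Equiv.ext
    intro x
    exact absurd x.isLt (by omega)

lemma usage_of_n_zero (P : OPM α) {G : Graph (Binding α)} (h : G.n = 0) :
    usage P G P.eps := by
  refine ⟨Equiv.refl _, fun i j _ => absurd i.isLt (by omega), ?_⟩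
  have : orderLabels G (Equiv.refl _) = [] := by
    apply List.eq_nil_of_length_eq_zero
    simp [orderLabels, h]
  rw [this]
  rfl

lemma join_zero_iso {A : Graph B} (G : Graph B) (hA : A.n = 0) :
    Graph.Iso (A.join G) G := by
  refine ⟨by show A.n + G.n = G.n; omega, id, Function.bijective_id, ?_, ?_⟩
  · intro i j
    show (A.join G).edge i.val j.val ↔ G.edge i.val j.val
    constructor
    · rintro (h | ⟨_, _, h⟩ | ⟨h1, _, _⟩)
      · exact absurd ((A.edge_lt _ _ h).1) (by omega)
      · rwa [hA, Nat.sub_zero, Nat.sub_zero] at h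
      · omega
    · intro h
      exact Or.inr (Or.inl ⟨by omega, by omega, by rwa [hA, Nat.sub_zero, Nat.sub_zero]⟩)
  · intro i
    show (A.join G).label i.val = G.label i.val
    show (if i.val < A.n then A.label i.val else G.label (i.val - A.n)) = _
    rw [if_neg (by omega), hA, Nat.sub_zero]

lemma join_assoc_iso (A C D : Graph B) :
    Graph.Iso ((A.join C).join D) (A.join (C.join D)) := by
  have eAC : (A.join C).n = A.n + C.n := rfl
  have eCD : (C.join D).n = C.n + D.n := rfl
  have hn : ((A.join C).join D).n = (A.join (C.join D)).n := by
    show A.n + C.n + D.n = A.n + (C.n + D.n); omega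
  refine ⟨hn, id, Function.bijective_id, ?_, ?_⟩
  · intro i j
    show ((A.join C).join D).edge i.val j.val ↔ (A.join (C.join D)).edge i.val j.val
    constructor
    · rintro ((h | ⟨h1, h2, h⟩ | ⟨h1, h2, h3⟩) | ⟨h1, h2, h⟩ | ⟨h1, h2, h3⟩)
      · exact Or.inl h
      · exact Or.inr (Or.inl ⟨h1, h2, Or.inl h⟩)
      · exact Or.inr (Or.inr ⟨h1, h2, by omega⟩)
      · rw [eAC] at h1 h2 h
        refine Or.inr (Or.inl ⟨by omega, by omega, Or.inr (Or.inl ⟨by omega, by omega, ?_⟩)⟩)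
        rw [Nat.sub_sub, Nat.sub_sub]
        exact h
      · rw [eAC] at h1 h2 h3
        by_cases hiA : i.val < A.n
        · exact Or.inr (Or.inr ⟨hiA, by omega, by omega⟩)
        · exact Or.inr (Or.inl ⟨by omega, by omega,
            Or.inr (Or.inr ⟨by omega, by omega, by omega⟩)⟩)
    · rintro (h | ⟨h1, h2, (h | ⟨h3, h4, h⟩ | ⟨h3, h4, h5⟩)⟩ | ⟨h1, h2, h3⟩)
      · exact Or.inl (Or.inl h)
      · exact Or.inl (Or.inr (Or.inl ⟨h1, h2, h⟩))
      · refine Or.inr (Or.inl ⟨by omega, by omega, ?_⟩)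
        show D.edge (i.val - (A.join C).n) (j.val - (A.join C).n)
        rw [eAC, ← Nat.sub_sub, ← Nat.sub_sub]
        exact h
      · exact Or.inr (Or.inr ⟨by omega, by omega, by omega⟩)
      · by_cases hj : j.val < A.n + C.n
        · exact Or.inl (Or.inr (Or.inr ⟨h1, h2, by omega⟩))
        · exact Or.inr (Or.inr ⟨by omega, by omega, by omega⟩)
  · intro i
    show ((A.join C).join D).label i.val = (A.join (C.join D)).label i.val
    show (if i.val < (A.join C).n then (A.join C).label i.val else D.label (i.val - (A.join C).n))
      = (if i.val < A.n then A.label i.val else (C.join D).label (i.val - A.n))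
    by_cases h1 : i.val < A.n
    · rw [if_pos (by rw [eAC]; omega), if_pos h1]
      show (if i.val < A.n then A.label i.val else _) = _
      rw [if_pos h1]
    · by_cases h2 : i.val < A.n + C.n
      · rw [if_pos (by rw [eAC]; omega), if_neg h1]
        show (if i.val < A.n then _ else C.label (i.val - A.n)) = _
        rw [if_neg h1]
        show _ = (if i.val - A.n < C.n then C.label (i.val - A.n) else _)
        rw [if_pos (by omega)]
      · rw [if_neg (by rw [eAC]; omega), if_neg h1]
        show D.label (i.val - (A.join C).n)
          = (if i.val - A.n < C.n then _ else D.label (i.val - A.n - C.n))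
        rw [if_neg (by omega), eAC, Nat.sub_sub]

/-! ### Iso invariance of traceability and usage -/

section IsoInv

variable {G G' : Graph B}

/-- Transport a permutation along an isomorphism. -/
def isoPerm (hn : G.n = G'.n) (F : Fin G.n ≃ Fin G.n) (h' : Equiv.Perm (Fin G'.n)) :
    Equiv.Perm (Fin G.n) :=
  ((finCongr hn).trans h').trans ((finCongr hn).symm.trans F)

lemma iso_topOrder_transfer (h : Graph.Iso G G') :
    ∃ Ψ : Equiv.Perm (Fin G'.n) → Equiv.Perm (Fin G.n),
      Function.Bijective Ψ ∧
      (∀ h', Graph.IsTopOrder G' h' ↔ Graph.IsTopOrder G (Ψ h')) ∧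
      (∀ h', orderLabels G (Ψ h') = orderLabels G' h') := by
  obtain ⟨hn, f, fbij, fedge, flab⟩ := h
  let F : Fin G.n ≃ Fin G.n := Equiv.ofBijective f fbij
  have hFf : ∀ x, F x = f x := fun _ => rfl
  let c : Fin G.n ≃ Fin G'.n := finCongr hn
  have symm_eq : ∀ (h' : Equiv.Perm (Fin G'.n)) (x : Fin G.n),
      (isoPerm hn F h').symm x = c.symm (h'.symm (c (F.symm x))) := by
    intro h' x
    simp [isoPerm, Equiv.symm_trans_apply, c]
  refine ⟨fun h' => isoPerm hn F h', ?_, ?_, ?_⟩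
  · constructor
    · intro a b hab
      apply Equiv.ext
      intro x
      have := congrArg (fun (e : Equiv.Perm (Fin G.n)) => e (c.symm x)) hab
      simp only [isoPerm, Equiv.trans_apply] at this
      have h2 := F.injective this
      have h3 := (finCongr hn).symm.injective h2
      simpa [c] using h3
    · intro e
      refine ⟨c.symm.trans (e.trans ((c.symm.trans F).symm)), ?_⟩
      apply Equiv.ext
      intro x
      simp [isoPerm, Equiv.symm_trans_apply, c]
  · intro h'
    constructor
    · intro ht i j he
      have hi' : G.edge (f (F.symm i)).val (f (F.symm j)).val ↔
          G'.edge (F.symm i).val (F.symm j).val := fedge (F.symm i) (F.symm j)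
      have hfi : f (F.symm i) = i := F.apply_symm_apply i
      have hfj : f (F.symm j) = j := F.apply_symm_apply j
      rw [hfi, hfj] at hi'
      have he' : G'.edge (c (F.symm i)).val (c (F.symm j)).val := by
        simpa [c] using hi'.mp he
      have := ht (c (F.symm i)) (c (F.symm j)) he'
      rw [Fin.lt_def, symm_eq h' i, symm_eq h' j]
      rw [Fin.lt_def] at this
      simpa [c] using this
    · intro ht i j he
      have he2 : G.edge (f (c.symm i)).val (f (c.symm j)).val :=
        (fedge (c.symm i) (c.symm j)).mpr (by simpa [c] using he)
      have he2' : G.edge (F (c.symm i)).val (F (c.symm j)).val := by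
        rw [hFf, hFf]; exact he2
      have := ht (F (c.symm i)) (F (c.symm j)) he2'
      rw [Fin.lt_def, symm_eq h', symm_eq h'] at this
      simp only [Equiv.symm_apply_apply] at this
      rw [Fin.lt_def]
      simpa [c] using this
  · intro h'
    apply List.ext_getElem
    · simp [orderLabels, hn]
    · intro k hk1 hk2
      simp only [orderLabels, List.length_ofFn] at hk1 hk2
      simp only [orderLabels, List.getElem_ofFn]
      have hF : (isoPerm hn F h' ⟨k, hk1⟩) = f ((finCongr hn).symm (h' (finCongr hn ⟨k, hk1⟩))) := rfl
      have hlabeq := flab ((finCongr hn).symm (h' (finCongr hn ⟨k, hk1⟩)))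
      rw [hF, hlabeq]
      have hcast : finCongr hn ⟨k, hk1⟩ = ⟨k, hk2⟩ := by
        apply Fin.ext; simp
      rw [hcast]
      rw [finCongr_symm_apply_coe]

end IsoInv

lemma iso_traceable {G G' : Graph B} (h : Graph.Iso G G') :
    Graph.Traceable G ↔ Graph.Traceable G' := by
  obtain ⟨Ψ, ⟨Ψinj, Ψsurj⟩, hord, _⟩ := iso_topOrder_transfer h
  constructor
  · rintro ⟨f, hf, huniq⟩
    obtain ⟨h', rfl⟩ := Ψsurj f
    refine ⟨h', (hord h').mpr hf, ?_⟩
    intro g hg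
    exact Ψinj (huniq (Ψ g) ((hord g).mp hg))
  · rintro ⟨h', hh', huniq⟩
    refine ⟨Ψ h', (hord h').mp hh', ?_⟩
    intro g hg
    obtain ⟨g', rfl⟩ := Ψsurj g
    rw [huniq g' ((hord g').mpr hg)]

lemma iso_usage (P : OPM α) {G G' : Graph (Binding α)} (h : Graph.Iso G G')
    (u : α) : usage P G u ↔ usage P G' u := by
  obtain ⟨Ψ, ⟨Ψinj, Ψsurj⟩, hord, hlab⟩ := iso_topOrder_transfer h
  constructor
  · rintro ⟨f, hf, hprod⟩
    obtain ⟨h', rfl⟩ := Ψsurj f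
    exact ⟨h', (hord h').mpr hf, by rwa [← hlab h']⟩
  · rintro ⟨h', hh', hprod⟩
    exact ⟨Ψ h', (hord h').mp hh', by rwa [hlab h']⟩

/-! ### Prepending a vertex -/

section Prepend

def consFun {m n : ℕ} (h : m = 1 + n) (g : Fin n → Fin n) : Fin m → Fin m := fun i =>
  if hi : i.val = 0 then ⟨0, by omega⟩
  else ⟨(g ⟨i.val - 1, by have := i.isLt; omega⟩).val + 1, by
    have := (g ⟨i.val - 1, by have := i.isLt; omega⟩).isLt; omega⟩

lemma consFun_val_zero {m n : ℕ} (h : m = 1 + n) (g : Fin n → Fin n) (i : Fin m)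
    (hi : i.val = 0) : (consFun h g i).val = 0 := by
  simp [consFun, hi]

lemma consFun_val_pos {m n : ℕ} (h : m = 1 + n) (g : Fin n → Fin n) (i : Fin m)
    (hi : i.val ≠ 0) :
    ∃ j : Fin n, j.val = i.val - 1 ∧ (consFun h g i).val = (g j).val + 1 := by
  refine ⟨⟨i.val - 1, by have := i.isLt; omega⟩, rfl, ?_⟩
  simp [consFun, hi]

/-- Prepend a fixed point to a permutation. -/
def consPerm {m n : ℕ} (h : m = 1 + n) (g : Equiv.Perm (Fin n)) : Equiv.Perm (Fin m) where
  toFun := consFun h g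
  invFun := consFun h g.symm
  left_inv := by
    intro i
    by_cases hi : i.val = 0
    · apply Fin.ext
      rw [consFun_val_zero h (⇑g.symm) _ (consFun_val_zero h (⇑g) i hi), hi]
    · apply Fin.ext
      obtain ⟨j, hj, hval⟩ := consFun_val_pos h (⇑g) i hi
      have h2 : (consFun h (⇑g) i).val ≠ 0 := by omega
      obtain ⟨k, hk, hvalk⟩ := consFun_val_pos h (⇑g.symm) (consFun h (⇑g) i) h2
      have hkj : k = g j := Fin.ext (by omega)
      rw [hvalk, hkj, Equiv.symm_apply_apply]
      have := i.isLt
      omega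
  right_inv := by
    intro i
    by_cases hi : i.val = 0
    · apply Fin.ext
      rw [consFun_val_zero h (⇑g) _ (consFun_val_zero h (⇑g.symm) i hi), hi]
    · apply Fin.ext
      obtain ⟨j, hj, hval⟩ := consFun_val_pos h (⇑g.symm) i hi
      have h2 : (consFun h (⇑g.symm) i).val ≠ 0 := by omega
      obtain ⟨k, hk, hvalk⟩ := consFun_val_pos h (⇑g) (consFun h (⇑g.symm) i) h2
      have hkj : k = g.symm j := Fin.ext (by omega)
      rw [hvalk, hkj, Equiv.apply_symm_apply]
      have := i.isLt
      omega

lemma consPerm_symm {m n : ℕ} (h : m = 1 + n) (g : Equiv.Perm (Fin n)) :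
    (consPerm h g).symm = consPerm h g.symm := rfl

lemma consPerm_val_zero {m n : ℕ} (h : m = 1 + n) (g : Equiv.Perm (Fin n))
    (i : Fin m) (hi : i.val = 0) : ((consPerm h g) i).val = 0 :=
  consFun_val_zero h (⇑g) i hi

lemma consPerm_val_pos {m n : ℕ} (h : m = 1 + n) (g : Equiv.Perm (Fin n))
    (i : Fin m) (hi : i.val ≠ 0) :
    ∃ j : Fin n, j.val = i.val - 1 ∧ ((consPerm h g) i).val = (g j).val + 1 :=
  consFun_val_pos h (⇑g) i hi

lemma consPerm_injective {m n : ℕ} (h : m = 1 + n) :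
    Function.Injective (consPerm h (n := n)) := by
  intro g₁ g₂ hg
  apply Equiv.ext
  intro x
  have hxm : x.val + 1 < m := by have := x.isLt; omega
  set y : Fin m := ⟨x.val + 1, hxm⟩ with hy
  have hyv : y.val = x.val + 1 := rfl
  have happ := congrArg (fun (e : Equiv.Perm (Fin m)) => (e y).val) hg
  obtain ⟨a, ha, hva⟩ := consPerm_val_pos h g₁ y (by omega)
  obtain ⟨b, hb, hvb⟩ := consPerm_val_pos h g₂ y (by omega)
  have ha' : a = x := Fin.ext (by omega)
  have hb' : b = x := Fin.ext (by omega)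
  apply Fin.ext
  have e1 : (g₁ x).val = (g₁ a).val := by rw [ha']
  have e2 : (g₂ x).val = (g₂ b).val := by rw [hb']
  omega

variable {B : Type} {A G : Graph B}

lemma join_n_eq (hA : A.n = 1) : (A.join G).n = 1 + G.n := by
  show A.n + G.n = 1 + G.n; omega

lemma prepend_topOrder (hA : A.n = 1) (hAe : ∀ i j, ¬ A.edge i j)
    (g : Equiv.Perm (Fin G.n)) (hg : Graph.IsTopOrder G g) :
    Graph.IsTopOrder (A.join G) (consPerm (join_n_eq hA) g) := by
  intro i j he
  have hJn : (A.join G).n = 1 + G.n := join_n_eq hA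
  have hiLt : i.val < 1 + G.n := by have := i.isLt; omega
  have hjLt : j.val < 1 + G.n := by have := j.isLt; omega
  show ((consPerm (join_n_eq hA) g).symm i).val < ((consPerm (join_n_eq hA) g).symm j).val
  rw [consPerm_symm]
  rcases he with h | ⟨h1, h2, h⟩ | ⟨h1, h2, h3⟩
  · exact absurd h (hAe _ _)
  · have hi0 : i.val ≠ 0 := by omega
    have hj0 : j.val ≠ 0 := by omega
    obtain ⟨a, ha, hva⟩ := consPerm_val_pos (join_n_eq hA) g.symm i hi0
    obtain ⟨b, hb, hvb⟩ := consPerm_val_pos (join_n_eq hA) g.symm j hj0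
    rw [hva, hvb]
    have hedge : G.edge a.val b.val := by
      rw [ha, hb]
      rwa [hA] at h
    have hlt : (g.symm a).val < (g.symm b).val := hg a b hedge
    omega
  · have hi0 : i.val = 0 := by omega
    have hj0 : j.val ≠ 0 := by omega
    obtain ⟨b, hb, hvb⟩ := consPerm_val_pos (join_n_eq hA) g.symm j hj0
    rw [consPerm_val_zero _ _ _ hi0, hvb]
    omega

lemma prepend_topOrder_inv (hA : A.n = 1) (f : Equiv.Perm (Fin (A.join G).n))
    (hf : Graph.IsTopOrder (A.join G) f) :
    ∃ g : Equiv.Perm (Fin G.n), Graph.IsTopOrder G g ∧ f = consPerm (join_n_eq hA) g := by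
  have hJn : (A.join G).n = 1 + G.n := join_n_eq hA
  have hpos : 0 < (A.join G).n := by omega
  have hf0 : (f ⟨0, hpos⟩).val = 0 := by
    by_contra h0
    have hedge : (A.join G).edge 0 (f ⟨0, hpos⟩).val := by
      refine Or.inr (Or.inr ⟨by omega, by omega, ?_⟩)
      have := (f ⟨0, hpos⟩).isLt
      exact this
    have hlt := hf ⟨0, hpos⟩ (f ⟨0, hpos⟩) hedge
    rw [Equiv.symm_apply_apply] at hlt
    exact absurd (show ((f.symm ⟨0, hpos⟩)).val < 0 from hlt) (by omega)
  have hfs0 : (f.symm ⟨0, hpos⟩).val = 0 := by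
    have heq : f ⟨0, hpos⟩ = ⟨0, hpos⟩ := Fin.ext hf0
    rw [← heq, Equiv.symm_apply_apply]
  have hfpos : ∀ i : Fin (A.join G).n, i.val ≠ 0 → (f i).val ≠ 0 := by
    intro i hi hcon
    have heq : f i = f ⟨0, hpos⟩ := Fin.ext (by rw [hf0]; exact hcon)
    have := f.injective heq
    rw [Fin.ext_iff] at this
    exact hi this
  have hfspos : ∀ i : Fin (A.join G).n, i.val ≠ 0 → (f.symm i).val ≠ 0 := by
    intro i hi hcon
    have heq : f.symm i = f.symm ⟨0, hpos⟩ := Fin.ext (by rw [hfs0]; exact hcon)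
    have := f.symm.injective heq
    rw [Fin.ext_iff] at this
    exact hi this
  have hb1 : ∀ j : Fin G.n, j.val + 1 < (A.join G).n := fun j => by
    have := j.isLt; omega
  let gf : Fin G.n → Fin G.n := fun j =>
    ⟨(f ⟨j.val + 1, hb1 j⟩).val - 1, by
      have h1 := (f ⟨j.val + 1, hb1 j⟩).isLt
      have h2 := hfpos ⟨j.val + 1, hb1 j⟩ (by simp)
      omega⟩
  let gi : Fin G.n → Fin G.n := fun j =>
    ⟨(f.symm ⟨j.val + 1, hb1 j⟩).val - 1, by
      have h1 := (f.symm ⟨j.val + 1, hb1 j⟩).isLt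
      have h2 := hfspos ⟨j.val + 1, hb1 j⟩ (by simp)
      omega⟩
  have hgf : ∀ j : Fin G.n, (gf j).val = (f ⟨j.val + 1, hb1 j⟩).val - 1 := fun j => rfl
  have hgi : ∀ j : Fin G.n, (gi j).val = (f.symm ⟨j.val + 1, hb1 j⟩).val - 1 := fun j => rfl
  have hli : Function.LeftInverse gi gf := by
    intro j
    apply Fin.ext
    have h2 := hfpos ⟨j.val + 1, hb1 j⟩ (by simp)
    have heq : (⟨(gf j).val + 1, hb1 (gf j)⟩ : Fin (A.join G).n) = f ⟨j.val + 1, hb1 j⟩ :=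
      Fin.ext (by show (gf j).val + 1 = _; rw [hgf]; omega)
    rw [hgi (gf j), heq, Equiv.symm_apply_apply]
    show j.val + 1 - 1 = j.val
    omega
  have hri : Function.RightInverse gi gf := by
    intro j
    apply Fin.ext
    have h2 := hfspos ⟨j.val + 1, hb1 j⟩ (by simp)
    have heq : (⟨(gi j).val + 1, hb1 (gi j)⟩ : Fin (A.join G).n) = f.symm ⟨j.val + 1, hb1 j⟩ :=
      Fin.ext (by show (gi j).val + 1 = _; rw [hgi]; omega)
    rw [hgf (gi j), heq, Equiv.apply_symm_apply]
    show j.val + 1 - 1 = j.val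
    omega
  let g : Equiv.Perm (Fin G.n) := ⟨gf, gi, hli, hri⟩
  have hgapp : ∀ j, (g j).val = (gf j).val := fun j => rfl
  have hgs : ∀ j, (g.symm j).val = (gi j).val := fun j => rfl
  refine ⟨g, ?_, ?_⟩
  · intro u v he
    have hedge : (A.join G).edge (u.val + 1) (v.val + 1) := by
      refine Or.inr (Or.inl ⟨by omega, by omega, ?_⟩)
      rw [hA]
      simpa using he
    have hlt := hf ⟨u.val + 1, hb1 u⟩ ⟨v.val + 1, hb1 v⟩ hedge
    have hlt' : (f.symm ⟨u.val + 1, hb1 u⟩).val < (f.symm ⟨v.val + 1, hb1 v⟩).val := hlt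
    have h1 := hfspos ⟨u.val + 1, hb1 u⟩ (by simp)
    show (g.symm u).val < (g.symm v).val
    rw [hgs, hgs, hgi, hgi]
    omega
  · apply Equiv.ext
    intro i
    apply Fin.ext
    by_cases hi : i.val = 0
    · rw [consPerm_val_zero (join_n_eq hA) g i hi]
      have heq : i = ⟨0, hpos⟩ := Fin.ext hi
      rw [heq]
      exact hf0
    · obtain ⟨a, ha, hva⟩ := consPerm_val_pos (join_n_eq hA) g i hi
      rw [hva, hgapp, hgf]
      have h2 := hfpos i hi
      have heq : (⟨a.val + 1, hb1 a⟩ : Fin (A.join G).n) = i :=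
        Fin.ext (by show a.val + 1 = i.val; omega)
      rw [heq]
      omega

lemma prepend_traceable (hA : A.n = 1) (hAe : ∀ i j, ¬ A.edge i j) :
    Graph.Traceable (A.join G) ↔ Graph.Traceable G := by
  constructor
  · rintro ⟨f, hf, huniq⟩
    obtain ⟨g, hg, rfl⟩ := prepend_topOrder_inv hA f hf
    refine ⟨g, hg, ?_⟩
    intro g' hg'
    exact consPerm_injective _ (huniq _ (prepend_topOrder hA hAe g' hg'))
  · rintro ⟨g, hg, huniq⟩
    refine ⟨consPerm (join_n_eq hA) g, prepend_topOrder hA hAe g hg, ?_⟩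
    intro f hf
    obtain ⟨g', hg', rfl⟩ := prepend_topOrder_inv hA f hf
    rw [huniq g' hg']

lemma prepend_orderLabels (hA : A.n = 1) (g : Equiv.Perm (Fin G.n)) :
    orderLabels (A.join G) (consPerm (join_n_eq hA) g) = A.label 0 :: orderLabels G g := by
  have hJn : (A.join G).n = 1 + G.n := join_n_eq hA
  apply List.ext_getElem
  · simp only [orderLabels, List.length_ofFn, List.length_cons]
    omega
  · intro k hk1 hk2
    simp only [orderLabels, List.length_ofFn] at hk1
    simp only [orderLabels, List.getElem_ofFn]
    match k, hk1, hk2 with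
    | 0, hk1, hk2 =>
      show (A.join G).label ((consPerm (join_n_eq hA) g) ⟨0, hk1⟩).val = A.label 0
      have h0 := consPerm_val_zero (join_n_eq hA) g ⟨0, hk1⟩ rfl
      rw [h0]
      show (if 0 < A.n then A.label 0 else _) = A.label 0
      rw [if_pos (by omega)]
    | k + 1, hk1, hk2 =>
      show (A.join G).label ((consPerm (join_n_eq hA) g) ⟨k + 1, hk1⟩).val
        = (A.label 0 :: orderLabels G g)[k + 1]'hk2
      have hkG : k < G.n := by omega
      obtain ⟨a, ha, hva⟩ := consPerm_val_pos (join_n_eq hA) g ⟨k + 1, hk1⟩ (by simp)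
      rw [hva]
      show (if (g a).val + 1 < A.n then _ else G.label ((g a).val + 1 - A.n))
        = (A.label 0 :: orderLabels G g)[k + 1]'hk2
      rw [if_neg (by omega), hA, Nat.add_sub_cancel]
      have hmk : (⟨k + 1, hk1⟩ : Fin (A.join G).n).val = k + 1 := rfl
      have ha' : a = ⟨k, hkG⟩ := Fin.ext (by show a.val = k; omega)
      rw [ha']
      show G.label (g ⟨k, hkG⟩).val = (orderLabels G g)[k]'(by
        simpa [orderLabels] using hkG)
      simp only [orderLabels, List.getElem_ofFn]

end Prepend

section UsagePrepend

variable {α : Type} {P : OPM α} {A G : Graph (Binding α)}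

lemma prepend_usage_mk (hA : A.n = 1) (hAe : ∀ i j, ¬ A.edge i j) {v u : α} (hv : usage P G v)
    (hmul : P.mul (bUsage P (A.label 0)) v = some u) : usage P (A.join G) u := by
  obtain ⟨g, hg, hprod⟩ := hv
  refine ⟨consPerm (join_n_eq hA) g, prepend_topOrder hA hAe g hg, ?_⟩
  rw [prepend_orderLabels hA]
  show (listProd P ((orderLabels G g).map (bUsage P))).bind
    (fun r => P.mul (bUsage P (A.label 0)) r) = some u
  rw [hprod]
  simpa using hmul

lemma prepend_usage_elim (hA : A.n = 1) {u : α} (hu : usage P (A.join G) u) :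
    ∃ v, usage P G v ∧ P.mul (bUsage P (A.label 0)) v = some u := by
  obtain ⟨f, hf, hprod⟩ := hu
  obtain ⟨g, hg, rfl⟩ := prepend_topOrder_inv hA f hf
  rw [prepend_orderLabels hA] at hprod
  have hbind : (listProd P ((orderLabels G g).map (bUsage P))).bind
      (fun r => P.mul (bUsage P (A.label 0)) r) = some u := by
    simpa [listProd] using hprod
  cases hv : listProd P ((orderLabels G g).map (bUsage P)) with
  | none => rw [hv] at hbind; simp at hbind
  | some v =>
    rw [hv] at hbind
    simp only [Option.bind_some] at hbind
    exact ⟨v, ⟨g, hg, hv⟩, hbind⟩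

end UsagePrepend

/-! ### Bool order -/

lemma bool_true_le {e : Bool} (h : true ≤ e) : e = true := by
  cases e
  · exact absurd h (by decide)
  · rfl

/-! ### Heap lemmas -/

lemma dom_update (H : Heap α) (l : ℕ) (t : ℕ × α × α) :
    (H.update l t).dom = insert l H.dom := by
  ext x
  simp only [Heap.dom, Heap.update, Set.mem_setOf_eq, Set.mem_insert_iff]
  by_cases h : x = l
  · simp [h]
  · simp [h]

lemma dom_erase (H : Heap α) (l : ℕ) : (H.erase l).dom = H.dom \ {l} := by
  ext x
  simp only [Heap.dom, Heap.erase, Set.mem_setOf_eq, Set.mem_diff, Set.mem_singleton_iff]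
  by_cases h : x = l
  · simp [h]
  · simp [h]

lemma find_update_eq (H : Heap α) (l : ℕ) (t : ℕ × α × α) :
    (H.update l t).find l = some t := by simp [Heap.update]

lemma find_update_ne (H : Heap α) (l l' : ℕ) (t : ℕ × α × α) (h : l' ≠ l) :
    (H.update l t).find l' = H.find l' := by simp [Heap.update, h]

lemma find_erase_eq (H : Heap α) (l : ℕ) : (H.erase l).find l = none := by
  simp [Heap.erase]

lemma find_erase_ne (H : Heap α) (l l' : ℕ) (h : l' ≠ l) :
    (H.erase l).find l' = H.find l' := by simp [Heap.erase, h]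

/-! ### Typing inversion -/

variable {P : OPM α}

lemma inv_app {Γ : Ctx α} {L : Expr α} {T : Ty α} {e : Bool}
    (h : Typing P Γ L T e) :
    ∀ M N, L = Expr.app M N →
      ∃ (Γ₁ Γ₂ : Ctx α) (S : Ty α) (e' e₁ e₂ : Bool),
        Typing P Γ₁ M (Ty.arrow S e' T) e₁ ∧ Typing P Γ₂ N S e₂ ∧
        SubC Γ (GCtx.comma Γ₁ Γ₂) ∧ (e' || e₁ || e₂) ≤ e := by
  induction h with
  | app Γ₁ Γ₂ M N S T e e₁ e₂ h1 h2 _ _ =>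
    intro M' N' hL
    injection hL with hM hN
    subst hM; subst hN
    exact ⟨Γ₁, Γ₂, S, e, e₁, e₂, h1, h2, subC_refl _, le_refl _⟩
  | weaken Γ₁ Γ₂ M T e₁ e₂ h1 hsub hle ih =>
    intro M' N' hL
    obtain ⟨Δ₁, Δ₂, S, e', d₁, d₂, t1, t2, hsub', hle'⟩ := ih M' N' hL
    exact ⟨Δ₁, Δ₂, S, e', d₁, d₂, t1, t2, subC_trans hsub hsub', le_trans hle' hle⟩
  | unit => intro M N hL; simp at hL
  | new m => intro M N hL; simp at hL
  | op m₀ m₁ m₂ hm => intro M N hL; simp at hL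
  | split m₀ m₁ m₂ hm => intro M N hL; simp at hL
  | drop m hm => intro M N hL; simp at hL
  | var x T => intro M N hL; simp at hL
  | loc l m => intro M N hL; simp at hL
  | abs Γ x S T M e h1 h2 h3 _ => intro M' N' hL; simp at hL
  | uabs Γ x S T M e h1 h2 _ => intro M' N' hL; simp at hL
  | rabs Γ x S T M e h1 h2 _ => intro M' N' hL; simp at hL
  | labs Γ x S T M e h1 h2 _ => intro M' N' hL; simp at hL
  | uapp Γ₁ Γ₂ M N S T e e₁ e₂ h1 h2 _ _ => intro M' N' hL; simp at hL
  | rapp Γ₁ Γ₂ M N S T e e₁ h1 h2 _ _ => intro M' N' hL; simp at hL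
  | lapp Γ₁ Γ₂ M N S T e e₂ h1 h2 _ _ => intro M' N' hL; simp at hL
  | upair Γ₁ Γ₂ M N S T e₁ e₂ h1 h2 _ _ => intro M' N' hL; simp at hL
  | opair Γ₁ Γ₂ M N S T e₁ e₂ ho h1 h2 _ _ => intro M' N' hL; simp at hL
  | ulet G Γ x y M N S₁ S₂ T e hxy hx hy h1 h2 _ _ => intro M' N' hL; simp at hL
  | olet G Γ x y M N S₁ S₂ T e hxy hx hy h1 h2 _ _ => intro M' N' hL; simp at hL

lemma inv_const_unit {Γ : Ctx α} {L : Expr α} {T : Ty α} {e : Bool}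
    (h : Typing P Γ L T e) :
    L = Expr.const Const.unit → T = Ty.unit ∧ SubC Γ GCtx.empty := by
  induction h with
  | unit => exact fun _ => ⟨rfl, subC_refl _⟩
  | weaken Γ₁ Γ₂ M T e₁ e₂ h1 hsub hle ih =>
    intro hL
    obtain ⟨hT, hs⟩ := ih hL
    exact ⟨hT, subC_trans hsub hs⟩
  | _ => intro hL <;> first | (simp at hL) | (exact absurd hL (by simp))

lemma inv_const_new {Γ : Ctx α} {L : Expr α} {T : Ty α} {e : Bool}
    (h : Typing P Γ L T e) :
    ∀ m, L = Expr.const (Const.new m) →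
      T = Ty.arrow Ty.unit false (Ty.res m) ∧ SubC Γ GCtx.empty := by
  induction h with
  | new m => intro m' hL; injection hL with h1; injection h1 with h2; subst h2
             exact ⟨rfl, subC_refl _⟩
  | weaken Γ₁ Γ₂ M T e₁ e₂ h1 hsub hle ih =>
    intro m hL
    obtain ⟨hT, hs⟩ := ih m hL
    exact ⟨hT, subC_trans hsub hs⟩
  | _ => intro m hL <;> first | (simp at hL) | (exact absurd hL (by simp))

lemma inv_const_op {Γ : Ctx α} {L : Expr α} {T : Ty α} {e : Bool}
    (h : Typing P Γ L T e) :
    ∀ m, L = Expr.const (Const.op m) →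
      ∃ m₀ m₂, T = Ty.arrow (Ty.res m₀) true (Ty.res m₂) ∧ P.mulLe m m₂ m₀ ∧
        SubC Γ GCtx.empty := by
  induction h with
  | op m₀ m₁ m₂ hm =>
    intro m hL; injection hL with h1; injection h1 with h2; subst h2
    exact ⟨m₀, m₂, rfl, hm, subC_refl _⟩
  | weaken Γ₁ Γ₂ M T e₁ e₂ h1 hsub hle ih =>
    intro m hL
    obtain ⟨m₀, m₂, hT, hm, hs⟩ := ih m hL
    exact ⟨m₀, m₂, hT, hm, subC_trans hsub hs⟩
  | _ => intro m hL <;> first | (simp at hL) | (exact absurd hL (by simp))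

lemma inv_const_split {Γ : Ctx α} {L : Expr α} {T : Ty α} {e : Bool}
    (h : Typing P Γ L T e) :
    ∀ m₁ m₂, L = Expr.const (Const.split m₁ m₂) →
      ∃ m₀, T = Ty.arrow (Ty.res m₀) false (Ty.oprod (Ty.res m₁) (Ty.res m₂)) ∧
        P.mulLe m₁ m₂ m₀ ∧ SubC Γ GCtx.empty := by
  induction h with
  | split m₀ m₁ m₂ hm =>
    intro n₁ n₂ hL; injection hL with h1; injection h1 with h2 h3
    subst h2; subst h3
    exact ⟨m₀, rfl, hm, subC_refl _⟩
  | weaken Γ₁ Γ₂ M T e₁ e₂ h1 hsub hle ih =>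
    intro n₁ n₂ hL
    obtain ⟨m₀, hT, hm, hs⟩ := ih n₁ n₂ hL
    exact ⟨m₀, hT, hm, subC_trans hsub hs⟩
  | _ => intro n₁ n₂ hL <;> first | (simp at hL) | (exact absurd hL (by simp))

lemma inv_const_drop {Γ : Ctx α} {L : Expr α} {T : Ty α} {e : Bool}
    (h : Typing P Γ L T e) :
    L = Expr.const Const.drop →
      ∃ m₀, T = Ty.arrow (Ty.res m₀) false Ty.unit ∧ P.le P.eps m₀ ∧
        SubC Γ GCtx.empty := by
  induction h with
  | drop m hm => exact fun _ => ⟨m, rfl, hm, subC_refl _⟩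
  | weaken Γ₁ Γ₂ M T e₁ e₂ h1 hsub hle ih =>
    intro hL
    obtain ⟨m₀, hT, hm, hs⟩ := ih hL
    exact ⟨m₀, hT, hm, subC_trans hsub hs⟩
  | _ => intro hL <;> first | (simp at hL) | (exact absurd hL (by simp))

lemma inv_loc {Γ : Ctx α} {L : Expr α} {T : Ty α} {e : Bool}
    (h : Typing P Γ L T e) :
    ∀ l, L = Expr.loc l →
      ∃ m, T = Ty.res m ∧ SubC Γ (GCtx.bind (Binding.loc l m)) := by
  induction h with
  | loc l m =>
    intro l' hL; injection hL with h1; subst h1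
    exact ⟨m, rfl, subC_refl _⟩
  | weaken Γ₁ Γ₂ M T e₁ e₂ h1 hsub hle ih =>
    intro l hL
    obtain ⟨m, hT, hs⟩ := ih l hL
    exact ⟨m, hT, subC_trans hsub hs⟩
  | _ => intro l hL <;> first | (simp at hL) | (exact absurd hL (by simp))

/-! ### Context-shape helpers -/

lemma interp_focus_comma (X Y : Ctx α) (l : ℕ) :
    interpC (focus (GCtx.comma X Y) l) = (interpC (focus X l)).join (interpC (focus Y l)) := rfl

lemma n_interp_comma (X Y : Ctx α) :
    (interpC (GCtx.comma X Y)).n = (interpC X).n + (interpC Y).n := rfl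

lemma n_interp_empty : (interpC (GCtx.empty : Ctx α)).n = 0 := rfl

lemma n_interp_bind_loc (l : ℕ) (m : α) :
    (interpC (GCtx.bind (Binding.loc l m))).n = 1 := rfl

lemma runtime_toList_nil {C : Ctx α} (hC : isRuntime C) (hn : (interpC C).n = 0) :
    GCtx.toList C = [] := by
  have h1 := n_interpC C
  rw [runtime_filter_unr hC] at h1
  rw [hn] at h1
  exact List.eq_nil_of_length_eq_zero h1.symm

lemma runtime_toList_single {C : Ctx α} (hC : isRuntime C) {l : ℕ} {m : α}
    (hn : (interpC C).n = 1) (hlab : (interpC C).label 0 = Binding.loc l m) :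
    GCtx.toList C = [Binding.loc l m] := by
  have h1 := labelsList_interpC C
  rw [runtime_filter_unr hC] at h1
  have hlen : (GCtx.toList C).length = 1 := by
    rw [← h1, length_labelsList, hn]
  obtain ⟨b, hb⟩ := List.length_eq_one_iff.mp hlen
  rw [hb]
  have h2 : (labelsList (interpC C))[0]'(by rw [length_labelsList]; omega)
      = (interpC C).label 0 := List.getElem_ofFn _
  have h3 : (labelsList (interpC C))[0]'(by rw [length_labelsList]; omega) = b := by
    simp only [h1, hb]
    rfl
  rw [← h3, h2, hlab]

lemma single_graph_props {Δ : Ctx α} {l : ℕ} {m : α}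
    (hx : GCtx.toList Δ = [Binding.loc l m]) :
    (interpC Δ).n = 1 ∧ (interpC Δ).label 0 = Binding.loc l m ∧
      (∀ i j, ¬ (interpC Δ).edge i j) := by
  have hfil : (GCtx.toList Δ).filter (fun b => !b.unrB) = [Binding.loc l m] := by
    rw [hx]; rfl
  have hn : (interpC Δ).n = 1 := by rw [n_interpC, hfil]; rfl
  refine ⟨hn, label_zero_interpC hfil, ?_⟩
  intro i j hedge
  have hb := (interpC Δ).edge_lt i j hedge
  have hi : i = 0 := by omega
  have hj : j = 0 := by omega
  subst hi; subst hj
  exact noloop_interpC Δ 0 hedge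

lemma nil_graph_n {Δ : Ctx α} (hx : GCtx.toList Δ = []) : (interpC Δ).n = 0 := by
  rw [n_interpC, hx]; rfl

lemma ldom_of_toList_nil {C : Ctx α} (h : GCtx.toList C = []) : ldom C = ∅ := by
  ext x
  simp [ldom, h]

lemma ldom_of_toList_single {C : Ctx α} {l : ℕ} {m : α}
    (h : GCtx.toList C = [Binding.loc l m]) : ldom C = {l} := by
  ext x
  simp [ldom, h, Binding.loc.injEq]

/-- Extraction: a runtime context whose graph is a single `l : [m]` vertex. -/
lemma context_single {C Γ₁ Γ₂ : Ctx α} {l : ℕ} {M₀ : α} (hC : isRuntime C)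
    (hsubC : SubC C (GCtx.comma Γ₁ Γ₂)) (hs1 : SubC Γ₁ GCtx.empty)
    (hs2 : SubC Γ₂ (GCtx.bind (Binding.loc l M₀))) :
    GCtx.toList C = [Binding.loc l M₀] := by
  have n1 : (interpC Γ₁).n = 0 := (subC_n hs1).trans n_interp_empty
  have n2 : (interpC Γ₂).n = 1 := (subC_n hs2).trans (n_interp_bind_loc l M₀)
  have nC : (interpC C).n = 1 := by
    have := subC_n hsubC
    rw [n_interp_comma] at this
    omega
  have hcomma_n : (interpC (GCtx.comma Γ₁ Γ₂)).n = 1 := by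
    rw [n_interp_comma]; omega
  have hl1 := subC_label_one hsubC hcomma_n
  have hl2 := subC_label_one hs2 (n_interp_bind_loc l M₀)
  have hjoin : (interpC (GCtx.comma Γ₁ Γ₂)).label 0 = (interpC Γ₂).label 0 := by
    show (if (0:ℕ) < (interpC Γ₁).n then (interpC Γ₁).label 0
      else (interpC Γ₂).label (0 - (interpC Γ₁).n)) = (interpC Γ₂).label 0
    rw [if_neg (by omega), n1]
  have hbind : (interpC (GCtx.bind (Binding.loc l M₀))).label 0 = Binding.loc l M₀ := rfl
  exact runtime_toList_single hC nC (by rw [hl1, hjoin, hl2, hbind])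

/-- Extraction: a runtime context whose graph is empty. -/
lemma context_nil {C Γ₁ Γ₂ : Ctx α} (hC : isRuntime C)
    (hsubC : SubC C (GCtx.comma Γ₁ Γ₂)) (hs1 : SubC Γ₁ GCtx.empty)
    (hs2 : SubC Γ₂ GCtx.empty) :
    GCtx.toList C = [] := by
  have n1 : (interpC Γ₁).n = 0 := (subC_n hs1).trans n_interp_empty
  have n2 : (interpC Γ₂).n = 0 := (subC_n hs2).trans n_interp_empty
  have nC : (interpC C).n = 0 := by
    have := subC_n hsubC
    rw [n_interp_comma] at this
    omega
  exact runtime_toList_nil hC nC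

lemma isRuntime_empty : isRuntime (GCtx.empty : Ctx α) := by
  intro b hb
  simp [GCtx.toList] at hb

lemma isRuntime_bind_loc (l : ℕ) (m : α) :
    isRuntime (GCtx.bind (Binding.loc l m) : Ctx α) := by
  intro b hb
  simp only [GCtx.toList, List.mem_singleton] at hb
  exact ⟨l, m, hb⟩

lemma isRuntime_comma {X Y : Ctx α} (hX : isRuntime X) (hY : isRuntime Y) :
    isRuntime (GCtx.comma X Y) := by
  intro b hb
  simp only [GCtx.toList, List.mem_append] at hb
  rcases hb with h | h
  · exact hX b h
  · exact hY b h

lemma heap_side_transfer {A A' Bg : Graph (Binding α)} (P : OPM α)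
    (hA : A.n = 0) (hA' : A'.n = 0) :
    (Graph.Traceable (A.join Bg) ↔ Graph.Traceable (A'.join Bg)) ∧
    ((A.join Bg).n = (A'.join Bg).n) ∧
    (∀ u, usage P (A.join Bg) u ↔ usage P (A'.join Bg) u) := by
  have i1 := join_zero_iso Bg hA
  have i2 := join_zero_iso Bg hA'
  refine ⟨(iso_traceable i1).trans (iso_traceable i2).symm, ?_,
    fun u => (iso_usage P i1 u).trans (iso_usage P i2 u).symm⟩
  show A.n + Bg.n = A'.n + Bg.n
  omega

end Aux

/-- **Preservation for configuration reduction.** If `M | ℋ →γ M' | ℋ'`,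
`C ⊢ M : T | e`, and `(C , C'') ⊢ ℋ`, then there is a run-time context `C'`
with `(dom C' \ dom C) ∩ dom C'' = ∅`, `C' ⊢ M' : T | e`, and
`(C' , C'') ⊢ ℋ'`. -/
theorem preservation_gamma {α : Type} (P : OPM α) (C C'' : Ctx α)
    (M M' : Expr α) (H H' : Heap α) (T : Ty α) (e : Bool)
    (hC : isRuntime C) (hC'' : isRuntime C'')
    (hstep : CfgStep P M H M' H')
    (hty : Typing P C M T e)
    (hheap : HeapTy P (GCtx.comma C C'') H) :
    ∃ C' : Ctx α, isRuntime C' ∧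
      (ldom C' \ ldom C) ∩ ldom C'' = ∅ ∧
      Typing P C' M' T e ∧
      HeapTy P (GCtx.comma C' C'') H' := by
  obtain ⟨hOD, hdom, hconds⟩ := hheap
  cases hstep with
  | new H l m hl =>
    obtain ⟨Γ₁, Γ₂, S, e', e₁, e₂, h1, h2, hsubC, hle⟩ := inv_app hty _ _ rfl
    obtain ⟨hT, hs1⟩ := inv_const_new h1 m rfl
    injection hT with hS he' hT'
    subst hS; subst hT'
    obtain ⟨-, hs2⟩ := inv_const_unit h2 rfl
    have hCnil : GCtx.toList C = [] := context_nil hC hsubC hs1 hs2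
    have hldomC : ldom C = ∅ := ldom_of_toList_nil hCnil
    have hlC'' : l ∉ ldom C'' := by
      intro hmem
      apply hl
      rw [← hdom, ldom_comma]
      exact Or.inr hmem
    have hfoc : GCtx.toList (focus (GCtx.bind (Binding.loc l m)) l) = [Binding.loc l m] := by
      rw [toList_focus]
      simp [GCtx.toList, keepB]
    obtain ⟨hA1, hAlab, hAe⟩ := single_graph_props hfoc
    have hBn : (interpC (focus C'' l)).n = 0 := (n_focus_zero_iff hC'' l).mpr hlC''
    refine ⟨GCtx.bind (Binding.loc l m), isRuntime_bind_loc l m, ?_, ?_, ?_, ?_, ?_⟩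
    · ext x
      simp only [Set.mem_inter_iff, Set.mem_diff, Set.mem_empty_iff_false, iff_false,
        not_and, and_imp]
      intro hx _ hx''
      rw [ldom_of_toList_single (show GCtx.toList (GCtx.bind (Binding.loc l m))
        = [Binding.loc l m] from rfl)] at hx
      rw [Set.mem_singleton_iff] at hx
      subst hx
      exact hlC'' hx''
    · exact Typing.weaken _ _ _ _ false e (Typing.loc l m) (subC_refl _) (Bool.false_le e)
    · intro l'
      show Graph.Traceable
        ((interpC (focus (GCtx.bind (Binding.loc l m)) l')).join (interpC (focus C'' l')))
      by_cases hll : l' = l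
      · subst hll
        exact (prepend_traceable hA1 hAe).mpr (traceable_of_n_zero hBn)
      · have hAold : (interpC (focus C l')).n = 0 :=
          nil_graph_n (by rw [toList_focus, hCnil]; rfl)
        have hAnew : (interpC (focus (GCtx.bind (Binding.loc l m)) l')).n = 0 :=
          nil_graph_n (by rw [toList_focus]; simp only [GCtx.toList]; simp [keepB]; omega)
        have hold : Graph.Traceable
            ((interpC (focus C l')).join (interpC (focus C'' l'))) := hOD l'
        exact ((heap_side_transfer P hAold hAnew).1).mp hold
    · rw [ldom_comma, dom_update,
        ldom_of_toList_single (show GCtx.toList (GCtx.bind (Binding.loc l m))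
          = [Binding.loc l m] from rfl), ← hdom, ldom_comma, hldomC]
      ext x
      simp only [Set.mem_union, Set.mem_singleton_iff, Set.mem_insert_iff,
        Set.mem_empty_iff_false, false_or]
    · intro l' n' m₀' mtr hfind
      by_cases hll : l' = l
      · subst hll
        rw [find_update_eq] at hfind
        obtain ⟨h1', h2', h3'⟩ : (0 : ℕ) = n' ∧ m = m₀' ∧ P.eps = mtr := by
          have := Option.some.inj hfind
          simpa [Prod.ext_iff] using this
        refine ⟨?_, ?_⟩
        · have hj : (interpC (focus (GCtx.comma (GCtx.bind (Binding.loc l' m)) C'') l')).n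
              = (interpC (focus (GCtx.bind (Binding.loc l' m)) l')).n
                + (interpC (focus C'' l')).n := rfl
          rw [hj, hA1, hBn]
          omega
        · refine ⟨m, m, ?_, by rw [← h3']; exact P.eps_mul m,
            by rw [← h2']; exact P.le_refl m⟩
          rw [focusUsage_iff_usage]
          exact prepend_usage_mk hA1 hAe (usage_of_n_zero P hBn)
            (by rw [hAlab]; exact P.mul_eps m)
      · rw [find_update_ne _ _ _ _ hll] at hfind
        obtain ⟨hn_old, u, r, hu, hmulr, hler⟩ := hconds l' n' m₀' mtr hfind
        have hAold : (interpC (focus C l')).n = 0 :=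
          nil_graph_n (by rw [toList_focus, hCnil]; rfl)
        have hAnew : (interpC (focus (GCtx.bind (Binding.loc l m)) l')).n = 0 :=
          nil_graph_n (by rw [toList_focus]; simp only [GCtx.toList]; simp [keepB]; omega)
        have transfer := heap_side_transfer (Bg := interpC (focus C'' l')) P hAold hAnew
        constructor
        · have hno : (interpC (focus C l')).n + (interpC (focus C'' l')).n = n' + 1 := hn_old
          show (interpC (focus (GCtx.bind (Binding.loc l m)) l')).n
            + (interpC (focus C'' l')).n = n' + 1
          omega
        · refine ⟨u, r, ?_, hmulr, hler⟩
          rw [focusUsage_iff_usage] at hu ⊢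
          have hu' : usage P ((interpC (focus C l')).join (interpC (focus C'' l'))) u := hu
          exact (transfer.2.2 u).mp hu'
  | op H l n m₀ m m' m'' hfind0 hmul0 hsome0 =>
    obtain ⟨Γ₁, Γ₂, S, e', e₁, e₂, h1, h2, hsubC, hle⟩ := inv_app hty _ _ rfl
    obtain ⟨M₀, m₂, hT, hmle, hs1⟩ := inv_const_op h1 m rfl
    injection hT with hS he' hT'
    subst hS; subst hT'
    obtain ⟨M₀', hSm, hs2⟩ := inv_loc h2 l rfl
    injection hSm with hM
    subst hM
    have hClist : GCtx.toList C = [Binding.loc l M₀] := context_single hC hsubC hs1 hs2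
    have hldomC : ldom C = {l} := ldom_of_toList_single hClist
    have hfocC : GCtx.toList (focus C l) = [Binding.loc l M₀] := by
      rw [toList_focus, hClist]; simp [keepB]
    obtain ⟨hAo1, hAolab, hAoe⟩ := single_graph_props hfocC
    have hfocC' : GCtx.toList (focus (GCtx.bind (Binding.loc l m₂)) l)
        = [Binding.loc l m₂] := by
      rw [toList_focus]; simp [GCtx.toList, keepB]
    obtain ⟨hA1, hAlab, hAe⟩ := single_graph_props hfocC'
    obtain ⟨hn_old, u, r, hu, hmulr, hler⟩ := hconds l n m₀ m' hfind0
    have hno : (interpC (focus C l)).n + (interpC (focus C'' l)).n = n + 1 := hn_old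
    have hBn : (interpC (focus C'' l)).n = n := by omega
    rw [focusUsage_iff_usage] at hu
    have huJ : usage P ((interpC (focus C l)).join (interpC (focus C'' l))) u := hu
    obtain ⟨v, hvB, hmulv⟩ := prepend_usage_elim hAo1 huJ
    have hMv : P.mul M₀ v = some u := by rw [hAolab] at hmulv; exact hmulv
    obtain ⟨p, hp, hpM₀⟩ := hmle
    obtain ⟨w, hw, hwu⟩ := P.monoL hpM₀ hMv
    obtain ⟨u', hu'2, hmu'⟩ := P.assoc₁ hp hw
    obtain ⟨r₂, hr₂, hr₂r⟩ := P.monoR hwu hmulr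
    obtain ⟨x, hx, hxr₂⟩ := P.assoc₂ hmu' hr₂
    have hxeq : m'' = x := by rw [hmul0] at hx; exact Option.some.inj hx
    subst hxeq
    refine ⟨GCtx.bind (Binding.loc l m₂), isRuntime_bind_loc l m₂, ?_, ?_, ?_, ?_, ?_⟩
    · rw [ldom_of_toList_single (show GCtx.toList (GCtx.bind (Binding.loc l m₂))
        = [Binding.loc l m₂] from rfl), hldomC]
      simp
    · exact Typing.weaken _ _ _ _ false e (Typing.loc l m₂) (subC_refl _) (Bool.false_le e)
    · intro l'
      show Graph.Traceable
        ((interpC (focus (GCtx.bind (Binding.loc l m₂)) l')).join (interpC (focus C'' l')))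
      by_cases hll : l' = l
      · subst hll
        have holdT : Graph.Traceable
            ((interpC (focus C l')).join (interpC (focus C'' l'))) := hOD l'
        exact (prepend_traceable hA1 hAe).mpr ((prepend_traceable hAo1 hAoe).mp holdT)
      · have hAold0 : (interpC (focus C l')).n = 0 :=
          nil_graph_n (by rw [toList_focus, hClist]; simp [keepB]; omega)
        have hAnew0 : (interpC (focus (GCtx.bind (Binding.loc l m₂)) l')).n = 0 :=
          nil_graph_n (by rw [toList_focus]; simp only [GCtx.toList]; simp [keepB]; omega)
        exact ((heap_side_transfer P hAold0 hAnew0).1).mp (hOD l')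
    · rw [ldom_comma, dom_update,
        ldom_of_toList_single (show GCtx.toList (GCtx.bind (Binding.loc l m₂))
          = [Binding.loc l m₂] from rfl), ← hdom, ldom_comma, hldomC]
      ext x
      simp only [Set.mem_union, Set.mem_singleton_iff, Set.mem_insert_iff]
      tauto
    · intro l' n' m₀' mtr hfind
      by_cases hll : l' = l
      · subst hll
        rw [find_update_eq] at hfind
        obtain ⟨h1', h2', h3'⟩ : n = n' ∧ m₀ = m₀' ∧ m'' = mtr := by
          simpa [Prod.ext_iff] using Option.some.inj hfind
        refine ⟨?_, ?_⟩
        · have hj : (interpC (focus (GCtx.comma (GCtx.bind (Binding.loc l' m₂)) C'') l')).n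
              = (interpC (focus (GCtx.bind (Binding.loc l' m₂)) l')).n
                + (interpC (focus C'' l')).n := rfl
          rw [hj, hA1, hBn]
          omega
        · refine ⟨u', r₂, ?_, by rw [← h3']; exact hxr₂,
            by rw [← h2']; exact P.le_trans _ _ _ hr₂r hler⟩
          rw [focusUsage_iff_usage]
          exact prepend_usage_mk hA1 hAe hvB (by rw [hAlab]; exact hu'2)
      · rw [find_update_ne _ _ _ _ hll] at hfind
        obtain ⟨hn_old', u₃, r₃, hu₃, hmulr₃, hler₃⟩ := hconds l' n' m₀' mtr hfind
        have hAold0 : (interpC (focus C l')).n = 0 :=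
          nil_graph_n (by rw [toList_focus, hClist]; simp [keepB]; omega)
        have hAnew0 : (interpC (focus (GCtx.bind (Binding.loc l m₂)) l')).n = 0 :=
          nil_graph_n (by rw [toList_focus]; simp only [GCtx.toList]; simp [keepB]; omega)
        have transfer := heap_side_transfer (Bg := interpC (focus C'' l')) P hAold0 hAnew0
        refine ⟨?_, ?_⟩
        · have hno' : (interpC (focus C l')).n + (interpC (focus C'' l')).n = n' + 1 := hn_old'
          show (interpC (focus (GCtx.bind (Binding.loc l m₂)) l')).n
            + (interpC (focus C'' l')).n = n' + 1
          omega
        · refine ⟨u₃, r₃, ?_, hmulr₃, hler₃⟩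
          rw [focusUsage_iff_usage] at hu₃ ⊢
          have hu₃' : usage P ((interpC (focus C l')).join (interpC (focus C'' l'))) u₃ := hu₃
          exact (transfer.2.2 u₃).mp hu₃'
  | cl1 H l n m₀ m hfind0 =>
    obtain ⟨Γ₁, Γ₂, S, e', e₁, e₂, h1, h2, hsubC, hle⟩ := inv_app hty _ _ rfl
    obtain ⟨M₀, hT, hεM₀, hs1⟩ := inv_const_drop h1 rfl
    injection hT with hS he' hT'
    subst hS; subst hT'
    obtain ⟨M₀', hSm, hs2⟩ := inv_loc h2 l rfl
    injection hSm with hM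
    subst hM
    have hClist : GCtx.toList C = [Binding.loc l M₀] := context_single hC hsubC hs1 hs2
    have hldomC : ldom C = {l} := ldom_of_toList_single hClist
    have hfocC : GCtx.toList (focus C l) = [Binding.loc l M₀] := by
      rw [toList_focus, hClist]; simp [keepB]
    obtain ⟨hAo1, hAolab, hAoe⟩ := single_graph_props hfocC
    obtain ⟨hn_old, u, r, hu, hmulr, hler⟩ := hconds l (n + 1) m₀ m hfind0
    have hno : (interpC (focus C l)).n + (interpC (focus C'' l)).n = (n + 1) + 1 := hn_old
    have hBn : (interpC (focus C'' l)).n = n + 1 := by omega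
    rw [focusUsage_iff_usage] at hu
    have huJ : usage P ((interpC (focus C l)).join (interpC (focus C'' l))) u := hu
    obtain ⟨v, hvB, hmulv⟩ := prepend_usage_elim hAo1 huJ
    have hMv : P.mul M₀ v = some u := by rw [hAolab] at hmulv; exact hmulv
    obtain ⟨w, hw, hwu⟩ := P.monoL hεM₀ hMv
    have hwv : v = w := by rw [P.eps_mul] at hw; exact Option.some.inj hw
    subst hwv
    obtain ⟨r₂, hr₂, hr₂r⟩ := P.monoR hwu hmulr
    have hlC'' : l ∈ ldom C'' := by
      by_contra hno'
      have := (n_focus_zero_iff hC'' l).mpr hno'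
      omega
    refine ⟨GCtx.empty, isRuntime_empty, ?_, ?_, ?_, ?_, ?_⟩
    · rw [ldom_of_toList_nil (show GCtx.toList (GCtx.empty : Ctx α) = [] from rfl)]
      simp
    · exact Typing.weaken _ _ _ _ false e Typing.unit (subC_refl _) (Bool.false_le e)
    · intro l'
      show Graph.Traceable
        ((interpC (focus GCtx.empty l')).join (interpC (focus C'' l')))
      have hAnew0 : (interpC (focus (GCtx.empty : Ctx α) l')).n = 0 :=
        nil_graph_n (by rw [toList_focus]; rfl)
      by_cases hll : l' = l
      · subst hll
        have holdT : Graph.Traceable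
            ((interpC (focus C l')).join (interpC (focus C'' l'))) := hOD l'
        exact (iso_traceable (join_zero_iso _ hAnew0)).mpr
          ((prepend_traceable hAo1 hAoe).mp holdT)
      · have hAold0 : (interpC (focus C l')).n = 0 :=
          nil_graph_n (by rw [toList_focus, hClist]; simp [keepB]; omega)
        exact ((heap_side_transfer P hAold0 hAnew0).1).mp (hOD l')
    · rw [ldom_comma, dom_update, ← hdom, ldom_comma, hldomC,
        ldom_of_toList_nil (show GCtx.toList (GCtx.empty : Ctx α) = [] from rfl)]
      ext x
      simp only [Set.mem_union, Set.mem_empty_iff_false, false_or, Set.mem_insert_iff,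
        Set.mem_singleton_iff]
      constructor
      · intro hx
        exact Or.inr (Or.inr hx)
      · rintro (rfl | rfl | hx)
        · exact hlC''
        · exact hlC''
        · exact hx
    · intro l' n' m₀' mtr hfind
      have hAnew0 : (interpC (focus (GCtx.empty : Ctx α) l')).n = 0 :=
        nil_graph_n (by rw [toList_focus]; rfl)
      by_cases hll : l' = l
      · subst hll
        rw [find_update_eq] at hfind
        obtain ⟨h1', h2', h3'⟩ : n = n' ∧ m₀ = m₀' ∧ m = mtr := by
          simpa [Prod.ext_iff] using Option.some.inj hfind
        refine ⟨?_, ?_⟩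
        · have hj : (interpC (focus (GCtx.comma GCtx.empty C'') l')).n
              = (interpC (focus (GCtx.empty : Ctx α) l')).n
                + (interpC (focus C'' l')).n := rfl
          rw [hj, hAnew0, hBn]
          omega
        · refine ⟨v, r₂, ?_, by rw [← h3']; exact hr₂,
            by rw [← h2']; exact P.le_trans _ _ _ hr₂r hler⟩
          rw [focusUsage_iff_usage]
          exact (iso_usage P (join_zero_iso _ hAnew0) v).mpr hvB
      · rw [find_update_ne _ _ _ _ hll] at hfind
        obtain ⟨hn_old', u₃, r₃, hu₃, hmulr₃, hler₃⟩ := hconds l' n' m₀' mtr hfind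
        have hAold0 : (interpC (focus C l')).n = 0 :=
          nil_graph_n (by rw [toList_focus, hClist]; simp [keepB]; omega)
        have transfer := heap_side_transfer (Bg := interpC (focus C'' l')) P hAold0 hAnew0
        refine ⟨?_, ?_⟩
        · have hno' : (interpC (focus C l')).n + (interpC (focus C'' l')).n = n' + 1 := hn_old'
          show (interpC (focus (GCtx.empty : Ctx α) l')).n
            + (interpC (focus C'' l')).n = n' + 1
          omega
        · refine ⟨u₃, r₃, ?_, hmulr₃, hler₃⟩
          rw [focusUsage_iff_usage] at hu₃ ⊢
          have hu₃' : usage P ((interpC (focus C l')).join (interpC (focus C'' l'))) u₃ := hu₃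
          exact (transfer.2.2 u₃).mp hu₃'
  | cl2 H l m₀ m hfind0 hle0 =>
    obtain ⟨Γ₁, Γ₂, S, e', e₁, e₂, h1, h2, hsubC, hle⟩ := inv_app hty _ _ rfl
    obtain ⟨M₀, hT, hεM₀, hs1⟩ := inv_const_drop h1 rfl
    injection hT with hS he' hT'
    subst hS; subst hT'
    obtain ⟨M₀', hSm, hs2⟩ := inv_loc h2 l rfl
    injection hSm with hM
    subst hM
    have hClist : GCtx.toList C = [Binding.loc l M₀] := context_single hC hsubC hs1 hs2
    have hldomC : ldom C = {l} := ldom_of_toList_single hClist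
    have hfocC : GCtx.toList (focus C l) = [Binding.loc l M₀] := by
      rw [toList_focus, hClist]; simp [keepB]
    obtain ⟨hAo1, hAolab, hAoe⟩ := single_graph_props hfocC
    obtain ⟨hn_old, u, r, hu, hmulr, hler⟩ := hconds l 0 m₀ m hfind0
    have hno : (interpC (focus C l)).n + (interpC (focus C'' l)).n = 0 + 1 := hn_old
    have hBn : (interpC (focus C'' l)).n = 0 := by omega
    have hlC'' : l ∉ ldom C'' := (n_focus_zero_iff hC'' l).mp hBn
    refine ⟨GCtx.empty, isRuntime_empty, ?_, ?_, ?_, ?_, ?_⟩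
    · rw [ldom_of_toList_nil (show GCtx.toList (GCtx.empty : Ctx α) = [] from rfl)]
      simp
    · exact Typing.weaken _ _ _ _ false e Typing.unit (subC_refl _) (Bool.false_le e)
    · intro l'
      show Graph.Traceable
        ((interpC (focus GCtx.empty l')).join (interpC (focus C'' l')))
      have hAnew0 : (interpC (focus (GCtx.empty : Ctx α) l')).n = 0 :=
        nil_graph_n (by rw [toList_focus]; rfl)
      by_cases hll : l' = l
      · subst hll
        refine traceable_of_n_zero ?_
        show (interpC (focus (GCtx.empty : Ctx α) l')).n + (interpC (focus C'' l')).n = 0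
        omega
      · have hAold0 : (interpC (focus C l')).n = 0 :=
          nil_graph_n (by rw [toList_focus, hClist]; simp [keepB]; omega)
        exact ((heap_side_transfer P hAold0 hAnew0).1).mp (hOD l')
    · rw [ldom_comma, dom_erase, ← hdom, ldom_comma, hldomC,
        ldom_of_toList_nil (show GCtx.toList (GCtx.empty : Ctx α) = [] from rfl)]
      ext x
      simp only [Set.mem_union, Set.mem_empty_iff_false, false_or, Set.mem_diff,
        Set.mem_singleton_iff]
      constructor
      · intro hx
        refine ⟨Or.inr hx, ?_⟩
        rintro rfl
        exact hlC'' hx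
      · rintro ⟨(rfl | hx), hne⟩
        · exact absurd rfl hne
        · exact hx
    · intro l' n' m₀' mtr hfind
      by_cases hll : l' = l
      · subst hll
        rw [find_erase_eq] at hfind
        simp at hfind
      · rw [find_erase_ne _ _ _ hll] at hfind
        obtain ⟨hn_old', u₃, r₃, hu₃, hmulr₃, hler₃⟩ := hconds l' n' m₀' mtr hfind
        have hAnew0 : (interpC (focus (GCtx.empty : Ctx α) l')).n = 0 :=
          nil_graph_n (by rw [toList_focus]; rfl)
        have hAold0 : (interpC (focus C l')).n = 0 :=
          nil_graph_n (by rw [toList_focus, hClist]; simp [keepB]; omega)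
        have transfer := heap_side_transfer (Bg := interpC (focus C'' l')) P hAold0 hAnew0
        refine ⟨?_, ?_⟩
        · have hno' : (interpC (focus C l')).n + (interpC (focus C'' l')).n = n' + 1 := hn_old'
          show (interpC (focus (GCtx.empty : Ctx α) l')).n
            + (interpC (focus C'' l')).n = n' + 1
          omega
        · refine ⟨u₃, r₃, ?_, hmulr₃, hler₃⟩
          rw [focusUsage_iff_usage] at hu₃ ⊢
          have hu₃' : usage P ((interpC (focus C l')).join (interpC (focus C'' l'))) u₃ := hu₃
          exact (transfer.2.2 u₃).mp hu₃'
  | sp H l n m₀ m m₁ m₂ hfind0 =>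
    obtain ⟨Γ₁, Γ₂, S, e', e₁, e₂, h1, h2, hsubC, hle⟩ := inv_app hty _ _ rfl
    obtain ⟨M₀, hT, hmle, hs1⟩ := inv_const_split h1 m₁ m₂ rfl
    injection hT with hS he' hT'
    subst hS; subst hT'
    obtain ⟨M₀', hSm, hs2⟩ := inv_loc h2 l rfl
    injection hSm with hM
    subst hM
    have hClist : GCtx.toList C = [Binding.loc l M₀] := context_single hC hsubC hs1 hs2
    have hldomC : ldom C = {l} := ldom_of_toList_single hClist
    have hfocC : GCtx.toList (focus C l) = [Binding.loc l M₀] := by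
      rw [toList_focus, hClist]; simp [keepB]
    obtain ⟨hAo1, hAolab, hAoe⟩ := single_graph_props hfocC
    have hfoc1 : GCtx.toList (focus (GCtx.bind (Binding.loc l m₁)) l)
        = [Binding.loc l m₁] := by
      rw [toList_focus]; simp [GCtx.toList, keepB]
    obtain ⟨hs11, hs1lab, hs1e⟩ := single_graph_props hfoc1
    have hfoc2 : GCtx.toList (focus (GCtx.bind (Binding.loc l m₂)) l)
        = [Binding.loc l m₂] := by
      rw [toList_focus]; simp [GCtx.toList, keepB]
    obtain ⟨hs21, hs2lab, hs2e⟩ := single_graph_props hfoc2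
    obtain ⟨hn_old, u, r, hu, hmulr, hler⟩ := hconds l n m₀ m hfind0
    have hno : (interpC (focus C l)).n + (interpC (focus C'' l)).n = n + 1 := hn_old
    have hBn : (interpC (focus C'' l)).n = n := by omega
    rw [focusUsage_iff_usage] at hu
    have huJ : usage P ((interpC (focus C l)).join (interpC (focus C'' l))) u := hu
    obtain ⟨v, hvB, hmulv⟩ := prepend_usage_elim hAo1 huJ
    have hMv : P.mul M₀ v = some u := by rw [hAolab] at hmulv; exact hmulv
    obtain ⟨p, hp, hpM₀⟩ := hmle
    obtain ⟨w, hw, hwu⟩ := P.monoL hpM₀ hMv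
    obtain ⟨q, hq, hmq⟩ := P.assoc₁ hp hw
    obtain ⟨r₂, hr₂, hr₂r⟩ := P.monoR hwu hmulr
    have hldomC' : ldom (GCtx.comma (GCtx.bind (Binding.loc l m₁))
        (GCtx.bind (Binding.loc l m₂))) = {l} := by
      rw [ldom_comma,
        ldom_of_toList_single (show GCtx.toList (GCtx.bind (Binding.loc l m₁))
          = [Binding.loc l m₁] from rfl),
        ldom_of_toList_single (show GCtx.toList (GCtx.bind (Binding.loc l m₂))
          = [Binding.loc l m₂] from rfl)]
      simp
    refine ⟨GCtx.comma (GCtx.bind (Binding.loc l m₁)) (GCtx.bind (Binding.loc l m₂)),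
      isRuntime_comma (isRuntime_bind_loc l m₁) (isRuntime_bind_loc l m₂), ?_, ?_, ?_, ?_, ?_⟩
    · rw [hldomC', hldomC]
      simp
    · refine Typing.weaken _ _ _ _ (false || false) e ?_ (subC_refl _) (Bool.false_le e)
      exact Typing.opair _ _ _ _ _ _ false false (fun _ => rfl) (Typing.loc l m₁)
        (Typing.loc l m₂)
    · intro l'
      show Graph.Traceable
        ((interpC (focus (GCtx.comma (GCtx.bind (Binding.loc l m₁))
          (GCtx.bind (Binding.loc l m₂))) l')).join (interpC (focus C'' l')))
      by_cases hll : l' = l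
      · subst hll
        have holdT : Graph.Traceable
            ((interpC (focus C l')).join (interpC (focus C'' l'))) := hOD l'
        have hBtr := (prepend_traceable hAo1 hAoe).mp holdT
        have h2tr := (prepend_traceable hs21 hs2e).mpr hBtr
        have h1tr := (prepend_traceable hs11 hs1e).mpr h2tr
        exact (iso_traceable (join_assoc_iso _ _ _)).mpr h1tr
      · have hAold0 : (interpC (focus C l')).n = 0 :=
          nil_graph_n (by rw [toList_focus, hClist]; simp [keepB]; omega)
        have hAnew0 : (interpC (focus (GCtx.comma (GCtx.bind (Binding.loc l m₁))
            (GCtx.bind (Binding.loc l m₂))) l')).n = 0 :=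
          nil_graph_n (by rw [toList_focus]; simp only [GCtx.toList]; simp [keepB]; omega)
        exact ((heap_side_transfer P hAold0 hAnew0).1).mp (hOD l')
    · rw [ldom_comma, dom_update, hldomC', ← hdom, ldom_comma, hldomC]
      ext x
      simp only [Set.mem_union, Set.mem_singleton_iff, Set.mem_insert_iff]
      tauto
    · intro l' n' m₀' mtr hfind
      by_cases hll : l' = l
      · subst hll
        rw [find_update_eq] at hfind
        obtain ⟨h1', h2', h3'⟩ : n + 1 = n' ∧ m₀ = m₀' ∧ m = mtr := by
          simpa [Prod.ext_iff] using Option.some.inj hfind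
        refine ⟨?_, ?_⟩
        · have hj : (interpC (focus (GCtx.comma (GCtx.comma (GCtx.bind (Binding.loc l' m₁))
              (GCtx.bind (Binding.loc l' m₂))) C'') l')).n
              = ((interpC (focus (GCtx.bind (Binding.loc l' m₁)) l')).n
                + (interpC (focus (GCtx.bind (Binding.loc l' m₂)) l')).n)
                + (interpC (focus C'' l')).n := rfl
          rw [hj, hs11, hs21, hBn]
          omega
        · refine ⟨w, r₂, ?_, by rw [← h3']; exact hr₂,
            by rw [← h2']; exact P.le_trans _ _ _ hr₂r hler⟩
          rw [focusUsage_iff_usage]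
          have hq' := prepend_usage_mk hs21 hs2e hvB (by rw [hs2lab]; exact hq)
          have hw' := prepend_usage_mk hs11 hs1e hq' (by rw [hs1lab]; exact hmq)
          exact (iso_usage P (join_assoc_iso _ _ _) w).mpr hw'
      · rw [find_update_ne _ _ _ _ hll] at hfind
        obtain ⟨hn_old', u₃, r₃, hu₃, hmulr₃, hler₃⟩ := hconds l' n' m₀' mtr hfind
        have hAold0 : (interpC (focus C l')).n = 0 :=
          nil_graph_n (by rw [toList_focus, hClist]; simp [keepB]; omega)
        have hAnew0 : (interpC (focus (GCtx.comma (GCtx.bind (Binding.loc l m₁))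
            (GCtx.bind (Binding.loc l m₂))) l')).n = 0 :=
          nil_graph_n (by rw [toList_focus]; simp only [GCtx.toList]; simp [keepB]; omega)
        have transfer := heap_side_transfer (Bg := interpC (focus C'' l')) P hAold0 hAnew0
        refine ⟨?_, ?_⟩
        · have hno' : (interpC (focus C l')).n + (interpC (focus C'' l')).n = n' + 1 := hn_old'
          show (interpC (focus (GCtx.comma (GCtx.bind (Binding.loc l m₁))
            (GCtx.bind (Binding.loc l m₂))) l')).n
            + (interpC (focus C'' l')).n = n' + 1
          omega
        · refine ⟨u₃, r₃, ?_, hmulr₃, hler₃⟩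
          rw [focusUsage_iff_usage] at hu₃ ⊢
          have hu₃' : usage P ((interpC (focus C l')).join (interpC (focus C'' l'))) u₃ := hu₃
          exact (transfer.2.2 u₃).mp hu₃'

end LawOrder
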